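/- arXiv:1411.7729 — 2 statements merged into one kernel-verified Lean document; each statement's English description precedes it below -/
import Mathlib

section
/- Let 𝓕 be a filter on ℕ, r ∈ ℕ, and B_w a bilateral weighted backward shift with bounded weight w = (w_k)_{k∈ℤ} on X = ℓ^p(ℤ) (1 ≤ p < ∞) or c₀(ℤ). Then the following are equivalent: (i) A_{M;j} ∈ l𝓕 and Ā_{M;j} ∈ l𝓕 for every 1 ≤ l ≤ r, every M > 0 and every j ∈ ℤ; (ii) B_w ⊕ B_w² ⊕ ⋯ ⊕ B_w^r is an 𝓕-operator on X^r. -/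
open Filter Topology
open scoped ENNReal

noncomputable def blockCount (A : Set ℕ) (k s : ℕ) : ℕ :=
  Nat.card (A ∩ Set.Icc (k + 1) (k + s) : Set ℕ)

/-- upper Banach density -/
noncomputable def upperBanachDensity (A : Set ℕ) : ℝ :=
  Filter.limsup (fun s : ℕ =>
    (Filter.limsup (fun k : ℕ => (blockCount A k s : ℝ)) Filter.atTop) / s) Filter.atTop

/-- lower Banach density -/
noncomputable def lowerBanachDensity (A : Set ℕ) : ℝ :=
  Filter.liminf (fun s : ℕ =>
    (Filter.liminf (fun k : ℕ => (blockCount A k s : ℝ)) Filter.atTop) / s) Filter.atTop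

/-- the family `BD̄` of sets of positive upper Banach density -/
def upperBD (A : Set ℕ) : Prop := 0 < upperBanachDensity A

/-- the family `BD₁` of sets of lower Banach density one -/
def BDone (A : Set ℕ) : Prop := lowerBanachDensity A = 1

/-- essential idempotent ultrafilter -/
def IsEssentialIdempotent (p : Ultrafilter ℕ) : Prop :=
  (∀ A : Set ℕ, A ∈ p ↔ {n : ℕ | {m : ℕ | n + m ∈ A} ∈ p} ∈ p) ∧
    ∀ A ∈ p, 0 < upperBanachDensity A

/-- membership in `𝒟*`, the intersection of all essential idempotents -/
def InDstar (A : Set ℕ) : Prop :=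
  ∀ p : Ultrafilter ℕ, IsEssentialIdempotent p → A ∈ p

/-- limit of a real sequence along a family of subsets of ℕ -/
def FamilyLim (F : Set ℕ → Prop) (x : ℕ → ℝ) (y : ℝ) : Prop :=
  ∀ V : Set ℝ, IsOpen V → y ∈ V → F {n | x n ∈ V}

/-- property `P_𝓕` for a sequence of maps -/
def SatisfiesP {X : Type*} [TopologicalSpace X] (T : ℕ → X → X) (F : Set ℕ → Prop) : Prop :=
  ∀ U : Set X, IsOpen U → U.Nonempty → ∃ x : X, F {n | T n x ∈ U}

/-- topological 𝒟-recurrence with respect to a sequence of scalars -/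
def TopDRecurrentWrt {X : Type*} [NormedAddCommGroup X] [NormedSpace ℂ X]
    (T : X →L[ℂ] X) (l : ℕ → ℂ) : Prop :=
  ∃ p : Ultrafilter ℕ, IsEssentialIdempotent p ∧
    ∀ U : Set X, IsOpen U → U.Nonempty → ∃ x : X, ∀ r : ℕ,
      {k : ℕ | 0 < upperBanachDensity
        {a : ℕ | ∀ j ≤ r, (T ^ (j * k)) (l a • (T ^ a) x) ∈ U}} ∈ p

/-- topological 𝒟-recurrence -/
def TopDRecurrent {X : Type*} [NormedAddCommGroup X] [NormedSpace ℂ X]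
    (T : X →L[ℂ] X) : Prop :=
  TopDRecurrentWrt T fun _ => 1

/-- reiterative hypercyclicity for a sequence of maps -/
def ReiterativelyHypercyclicSeq {X : Type*} [TopologicalSpace X] (T : ℕ → X → X) : Prop :=
  ∃ x : X, ∀ U : Set X, IsOpen U → U.Nonempty → 0 < upperBanachDensity {n | T n x ∈ U}

/-- 𝒟-reiterative hypercyclicity with respect to a sequence of scalars -/
def DReiterativelyHypercyclicWrt {X : Type*} [NormedAddCommGroup X] [NormedSpace ℂ X]
    (T : X →L[ℂ] X) (l : ℕ → ℂ) : Prop :=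
  ∃ p : Ultrafilter ℕ, IsEssentialIdempotent p ∧ ∃ x : X,
    ∀ U : Set X, IsOpen U → U.Nonempty → ∀ r : ℕ,
      {k : ℕ | 0 < upperBanachDensity
        {a : ℕ | ∀ j ≤ r, (T ^ (j * k)) (l a • (T ^ a) x) ∈ U}} ∈ p

/-- hypercyclic operator -/
def Hypercyclic {X : Type*} [NormedAddCommGroup X] [NormedSpace ℂ X] (T : X →L[ℂ] X) : Prop :=
  ∃ x : X, Dense (Set.range fun n : ℕ => (T ^ n) x)

/-- topological multiple recurrence -/
def TopMultiplyRecurrent {X : Type*} [NormedAddCommGroup X] [NormedSpace ℂ X]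
    (T : X →L[ℂ] X) : Prop :=
  ∀ U : Set X, IsOpen U → U.Nonempty → ∀ r : ℕ, ∃ k : ℕ, 0 < k ∧
    ∃ x : X, ∀ j ≤ r, (T ^ (j * k)) x ∈ U

/-- `𝓕`-operator -/
def FOperator {X : Type*} [NormedAddCommGroup X] [NormedSpace ℂ X]
    (F : Set ℕ → Prop) (T : X →L[ℂ] X) : Prop :=
  ∀ U V : Set X, IsOpen U → IsOpen V → U.Nonempty → V.Nonempty →
    F {n : ℕ | ∃ x ∈ U, (T ^ n) x ∈ V}

/-- mixing operator -/
def MixingOp {X : Type*} [NormedAddCommGroup X] [NormedSpace ℂ X]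
    (T : X →L[ℂ] X) : Prop :=
  ∀ U V : Set X, IsOpen U → IsOpen V → U.Nonempty → V.Nonempty →
    {n : ℕ | ∃ x ∈ U, (T ^ n) x ∈ V} ∈ Filter.cofinite

/-- recurrent operator -/
def RecurrentOp {X : Type*} [NormedAddCommGroup X] [NormedSpace ℂ X]
    (T : X →L[ℂ] X) : Prop :=
  ∀ U : Set X, IsOpen U → U.Nonempty →
    ∃ n : ℕ, 0 < n ∧ (U ∩ (fun x => (T ^ n) x) ⁻¹' U).Nonempty

/-- syndetic set -/
def Syndetic (A : Set ℕ) : Prop :=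
  ∃ k : ℕ, 0 < k ∧ ∀ n : ℕ, ∃ i : ℕ, 1 ≤ i ∧ i ≤ k ∧ n + i ∈ A

/-- upper (asymptotic) density -/
noncomputable def upperDensity (A : Set ℕ) : ℝ :=
  Filter.limsup (fun n : ℕ => (Nat.card (A ∩ Set.Icc 1 n : Set ℕ) : ℝ) / n) Filter.atTop

/-- bounded weight -/
def BddWeight {ι : Type*} (w : ι → ℂ) : Prop := ∃ C : ℝ, ∀ i, ‖w i‖ ≤ C

/-- unilateral weighted backward shift relative to a basis `e` -/
def IsUnilateralWeightedShift {X : Type*} [NormedAddCommGroup X] [NormedSpace ℂ X]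
    (e : ℕ → X) (w : ℕ → ℂ) (B : X →L[ℂ] X) : Prop :=
  B (e 0) = 0 ∧ ∀ n : ℕ, B (e (n + 1)) = w (n + 1) • e n

/-- bilateral weighted backward shift relative to a basis `e` -/
def IsBilateralWeightedShift {X : Type*} [NormedAddCommGroup X] [NormedSpace ℂ X]
    (e : ℤ → X) (w : ℤ → ℂ) (B : X →L[ℂ] X) : Prop :=
  ∀ k : ℤ, B (e k) = w k • e (k - 1)

/-- `B ⊕ B² ⊕ ⋯ ⊕ B^r` acting on `X^r` -/
noncomputable def directSumPow {X : Type*} [NormedAddCommGroup X] [NormedSpace ℂ X]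
    (T : X →L[ℂ] X) (r : ℕ) : (Fin r → X) →L[ℂ] (Fin r → X) :=
  ContinuousLinearMap.pi fun i => (T ^ ((i : ℕ) + 1)).comp (ContinuousLinearMap.proj i)

/-- canonical basis vector of `c₀` over a discrete index type -/
noncomputable def c0Single {α : Type*} [TopologicalSpace α] [DiscreteTopology α]
    [DecidableEq α] (k : α) : ZeroAtInftyContinuousMap α ℂ where
  toFun := fun m => if m = k then 1 else 0
  continuous_toFun := continuous_of_discreteTopology
  zero_at_infty' := by
    rw [Filter.cocompact_eq_cofinite]
    refine Filter.Tendsto.congr' ?_ tendsto_const_nhds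
    filter_upwards [Filter.eventually_cofinite_ne k] with m hm
    simp [hm]

/-- the set `A_{M;j}` for a bilateral weight -/
def AMjZ (w : ℤ → ℂ) (M : ℝ) (j : ℤ) : Set ℕ :=
  {n : ℕ | M < ∏ i ∈ Finset.Icc (j + 1) (j + (n : ℤ)), ‖w i‖}

/-- the set `Ā_{M;j}` for a bilateral weight -/
def AbarMjZ (w : ℤ → ℂ) (M : ℝ) (j : ℤ) : Set ℕ :=
  {n : ℕ | ∏ i ∈ Finset.Icc (j - (n : ℤ) + 1) j, ‖w i‖ < 1 / M}

/-- the set `A_{M;j}` for a unilateral weight -/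
def AMjN (w : ℕ → ℂ) (M : ℝ) (j : ℕ) : Set ℕ :=
  {n : ℕ | M < ∏ i ∈ Finset.Icc (j + 1) (j + n), ‖w i‖}

section Aux
variable {X : Type*} [NormedAddCommGroup X] [NormedSpace ℂ X]

lemma fam_inter {F : Set (Set ℕ)} (hne : F.Nonempty)
    (hup : ∀ A ∈ F, ∀ B : Set ℕ, A ⊆ B → B ∈ F)
    (hcap : ∀ A ∈ F, ∀ B ∈ F, A ∩ B ∈ F)
    {ι : Type*} [DecidableEq ι] (s : Finset ι) (g : ι → Set ℕ) (hg : ∀ i ∈ s, g i ∈ F) :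
    {n | ∀ i ∈ s, n ∈ g i} ∈ F := by
  induction s using Finset.induction_on with
  | empty =>
    obtain ⟨A, hA⟩ := hne
    exact hup A hA _ (by simp)
  | @insert a t ha ih =>
    have h1 : g a ∈ F := hg a (Finset.mem_insert_self a t)
    have h2 : {n | ∀ i ∈ t, n ∈ g i} ∈ F := ih fun i hi => hg i (Finset.mem_insert_of_mem hi)
    refine hup _ (hcap _ h1 _ h2) _ ?_
    intro n hn
    rcases hn with ⟨hna, hnt⟩
    intro i hi
    rcases Finset.mem_insert.mp hi with rfl | hi
    · exact hna
    · exact hnt i hi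

lemma pow_shift (w : ℤ → ℂ) (e : ℤ → X) (B : X →L[ℂ] X)
    (hB : ∀ k, B (e k) = w k • e (k - 1)) (m : ℕ) (k : ℤ) :
    (B ^ m) (e k) = (∏ i ∈ Finset.Icc (k - m + 1) k, w i) • e (k - m) := by
  induction m generalizing k with
  | zero => simp
  | succ m ih =>
    have h1 : (B ^ (m + 1)) (e k) = (B ^ m) (B (e k)) := by
      rw [pow_succ, ContinuousLinearMap.mul_apply]
    rw [h1, hB, map_smul, ih (k - 1), smul_smul]
    have hi : Finset.Icc (k - (m + 1 : ℕ) + 1) k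
        = insert k (Finset.Icc (k - 1 - (m : ℕ) + 1) (k - 1)) := by
      ext x
      simp only [Finset.mem_Icc, Finset.mem_insert]
      push_cast
      omega
    rw [hi, Finset.prod_insert (by simp), ]
    have : k - 1 - (m : ℕ) = k - (m + 1 : ℕ) := by push_cast; ring
    rw [this]

lemma coord_pow (w : ℤ → ℂ) (e : ℤ → X) (f : ℤ → X →L[ℂ] ℂ)
    (hfe : ∀ j k, f j (e k) = if k = j then 1 else 0)
    (hd : Dense ((Submodule.span ℂ (Set.range e) : Submodule ℂ X) : Set X))
    (B : X →L[ℂ] X) (hB : ∀ k, B (e k) = w k • e (k - 1)) (m : ℕ) (j : ℤ) (x : X) :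
    f j ((B ^ m) x) = (∏ i ∈ Finset.Icc (j + 1) (j + (m : ℤ)), w i) * f (j + m) x := by
  have h : (f j).comp (B ^ m)
      = (∏ i ∈ Finset.Icc (j + 1) (j + (m : ℤ)), w i) • f (j + m) := by
    apply ContinuousLinearMap.ext_on hd
    rintro _ ⟨k, rfl⟩
    simp only [ContinuousLinearMap.comp_apply, ContinuousLinearMap.smul_apply]
    rw [pow_shift w e B hB, map_smul, hfe, hfe]
    by_cases hk : k = j + m
    · subst hk
      simp only [show j + (m : ℤ) - m = j from by ring, if_pos rfl, smul_eq_mul, mul_one]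
    · rw [if_neg hk, if_neg (by omega), smul_zero, smul_eq_mul, mul_zero]
  calc f j ((B ^ m) x) = ((f j).comp (B ^ m)) x := rfl
    _ = _ := by rw [h]; rfl

lemma directSumPow_pow_apply (B : X →L[ℂ] X) (r n : ℕ) (z : Fin r → X) (i : Fin r) :
    ((directSumPow B r) ^ n) z i = (B ^ (((i : ℕ) + 1) * n)) (z i) := by
  induction n generalizing z with
  | zero => simp
  | succ n ih =>
    have h1 : ∀ y : Fin r → X, directSumPow B r y i = (B ^ ((i : ℕ) + 1)) (y i) :=
      fun _ => rfl
    rw [pow_succ', ContinuousLinearMap.mul_apply, h1, ih]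
    rw [← ContinuousLinearMap.mul_apply, ← pow_add]
    congr 1
    ring


end Aux

lemma norm_sum_corr_lt {X : Type*} [NormedAddCommGroup X] [NormedSpace ℂ X]
    (s : Finset ℤ) (dd : ℤ → ℂ) (P : ℤ → ℂ) (E : ℤ → X) (hE : ∀ k, ‖E k‖ ≤ 1)
    (ε : ℝ) (hε : 0 < ε)
    (hP : ∀ k ∈ s, ((s.card : ℝ) * ‖dd k‖ + 1) / ε < ‖P k‖)
    (hd0 : ∀ k ∈ s, dd k ≠ 0) :
    ‖∑ k ∈ s, (dd k / P k) • E k‖ < ε := by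
  rcases s.eq_empty_or_nonempty with hs | hs
  · rw [hs, Finset.sum_empty, norm_zero]; exact hε
  · have hcard : (0 : ℝ) < (s.card : ℝ) := by exact_mod_cast Finset.card_pos.mpr hs
    calc ‖∑ k ∈ s, (dd k / P k) • E k‖ ≤ ∑ k ∈ s, ‖dd k‖ / ‖P k‖ := by
          refine (norm_sum_le _ _).trans (Finset.sum_le_sum ?_)
          intro k hk
          rw [norm_smul, norm_div]
          exact mul_le_of_le_one_right (by positivity) (hE _)
      _ < ∑ _k ∈ s, ε / (s.card : ℝ) := by
          refine Finset.sum_lt_sum_of_nonempty hs ?_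
          intro k hk
          have hdk : (0 : ℝ) < ‖dd k‖ := norm_pos_iff.mpr (hd0 k hk)
          have hPA := hP k hk
          have hPpos : (0 : ℝ) < ‖P k‖ := lt_trans (by positivity) hPA
          rw [div_lt_div_iff₀ hPpos hcard]
          have h5 : (s.card : ℝ) * ‖dd k‖ + 1 < ε * ‖P k‖ := by
            have h6 := (div_lt_iff₀ hε).mp hPA
            nlinarith
          nlinarith
      _ = ε := by
          rw [Finset.sum_const, nsmul_eq_mul, mul_div_cancel₀ _ (ne_of_gt hcard)]

lemma norm_sum_term_lt {X : Type*} [NormedAddCommGroup X] [NormedSpace ℂ X]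
    (s : Finset ℤ) (cc : ℤ → ℂ) (Q : ℤ → ℂ) (E : ℤ → X) (hE : ∀ k, ‖E k‖ ≤ 1)
    (ε : ℝ) (hε : 0 < ε)
    (hQ : ∀ k ∈ s, ‖Q k‖ < ε / ((s.card : ℝ) * ‖cc k‖ + 1))
    (hc0 : ∀ k ∈ s, cc k ≠ 0) :
    ‖∑ k ∈ s, cc k • (Q k • E k)‖ < ε := by
  rcases s.eq_empty_or_nonempty with hs | hs
  · rw [hs, Finset.sum_empty, norm_zero]; exact hε
  · have hcard : (0 : ℝ) < (s.card : ℝ) := by exact_mod_cast Finset.card_pos.mpr hs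
    calc ‖∑ k ∈ s, cc k • (Q k • E k)‖ ≤ ∑ k ∈ s, ‖cc k‖ * ‖Q k‖ := by
          refine (norm_sum_le _ _).trans (Finset.sum_le_sum ?_)
          intro k hk
          rw [norm_smul, norm_smul]
          refine mul_le_mul_of_nonneg_left ?_ (norm_nonneg _)
          exact mul_le_of_le_one_right (norm_nonneg _) (hE _)
      _ < ∑ _k ∈ s, ε / (s.card : ℝ) := by
          refine Finset.sum_lt_sum_of_nonempty hs ?_
          intro k hk
          have hck : (0 : ℝ) < ‖cc k‖ := norm_pos_iff.mpr (hc0 k hk)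
          have hQk := hQ k hk
          have hQ0 : (0 : ℝ) ≤ ‖Q k‖ := norm_nonneg _
          rw [lt_div_iff₀ hcard]
          have h10 : ‖Q k‖ * ((s.card : ℝ) * ‖cc k‖ + 1) < ε := by
            rw [← lt_div_iff₀ (by positivity)]
            exact hQk
          nlinarith
      _ = ε := by
          rw [Finset.sum_const, nsmul_eq_mul, mul_div_cancel₀ _ (ne_of_gt hcard)]

section Abs
variable {X : Type*} [NormedAddCommGroup X] [NormedSpace ℂ X]

set_option maxHeartbeats 1000000 in
theorem abstract_forward
    (F : Set (Set ℕ)) (hne : F.Nonempty)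
    (hup : ∀ A ∈ F, ∀ B : Set ℕ, A ⊆ B → B ∈ F)
    (hcap : ∀ A ∈ F, ∀ B ∈ F, A ∩ B ∈ F)
    (r : ℕ) (w : ℤ → ℂ) (hw : ∀ k, w k ≠ 0)
    (e : ℤ → X) (f : ℤ → X →L[ℂ] ℂ)
    (hfe : ∀ j k, f j (e k) = if k = j then 1 else 0)
    (hfn : ∀ j x, ‖f j x‖ ≤ ‖x‖)
    (hen : ∀ k, ‖e k‖ ≤ 1)
    (hd : Dense ((Submodule.span ℂ (Set.range e) : Submodule ℂ X) : Set X))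
    (B : X →L[ℂ] X) (hB : ∀ k, B (e k) = w k • e (k - 1))
    (h : ∀ l : ℕ, 1 ≤ l → l ≤ r → ∀ M > (0 : ℝ), ∀ j : ℤ,
        {k : ℕ | l * k ∈ AMjZ w M j} ∈ F ∧ {k : ℕ | l * k ∈ AbarMjZ w M j} ∈ F) :
    FOperator (· ∈ F) (directSumPow B r) := by
  classical
  intro U V hUo hVo hUne hVne
  obtain ⟨x₀, hx₀⟩ := hUne
  obtain ⟨ρU, hρU, hballU⟩ := Metric.isOpen_iff.mp hUo x₀ hx₀
  obtain ⟨y₀, hy₀⟩ := hVne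
  obtain ⟨ρV, hρV, hballV⟩ := Metric.isOpen_iff.mp hVo y₀ hy₀
  have hεU : 0 < ρU / 2 := by positivity
  have hεV : 0 < ρV / 2 := by positivity
  have happroxU : ∀ i : Fin r, ∃ a : X,
      a ∈ Submodule.span ℂ (Set.range e) ∧ dist (x₀ i) a < ρU / 2 := fun i => by
    obtain ⟨a, ha, hda⟩ := hd.exists_dist_lt (x₀ i) hεU
    exact ⟨a, ha, hda⟩
  choose a haspan hadist using happroxU
  have happroxV : ∀ i : Fin r, ∃ b : X,
      b ∈ Submodule.span ℂ (Set.range e) ∧ dist (y₀ i) b < ρV / 2 := fun i => by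
    obtain ⟨b, hb, hdb⟩ := hd.exists_dist_lt (y₀ i) hεV
    exact ⟨b, hb, hdb⟩
  choose b hbspan hbdist using happroxV
  have hU' : ∀ z : Fin r → X, (∀ i, ‖z i - a i‖ < ρU / 2) → z ∈ U := by
    intro z hz
    apply hballU
    rw [Metric.mem_ball, dist_pi_lt_iff hρU]
    intro i
    rw [dist_eq_norm]
    calc ‖z i - x₀ i‖ ≤ ‖z i - a i‖ + ‖a i - x₀ i‖ := by
          simpa using norm_add_le (z i - a i) (a i - x₀ i)
      _ < ρU / 2 + ρU / 2 := by
          refine add_lt_add (hz i) ?_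
          rw [← dist_eq_norm, dist_comm]
          exact hadist i
      _ = ρU := by ring
  have hV' : ∀ z : Fin r → X, (∀ i, ‖z i - b i‖ < ρV / 2) → z ∈ V := by
    intro z hz
    apply hballV
    rw [Metric.mem_ball, dist_pi_lt_iff hρV]
    intro i
    rw [dist_eq_norm]
    calc ‖z i - y₀ i‖ ≤ ‖z i - b i‖ + ‖b i - y₀ i‖ := by
          simpa using norm_add_le (z i - b i) (b i - y₀ i)
      _ < ρV / 2 + ρV / 2 := by
          refine add_lt_add (hz i) ?_
          rw [← dist_eq_norm, dist_comm]
          exact hbdist i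
      _ = ρV := by ring
  have hcoef : ∀ i : Fin r, ∃ c : ℤ →₀ ℂ, (c.sum fun k t => t • e k) = a i :=
    fun i => Finsupp.mem_span_range_iff_exists_finsupp.mp (haspan i)
  choose c hcsum using hcoef
  have hdcoef : ∀ i : Fin r, ∃ dd : ℤ →₀ ℂ, (dd.sum fun k t => t • e k) = b i :=
    fun i => Finsupp.mem_span_range_iff_exists_finsupp.mp (hbspan i)
  choose d hdsum using hdcoef
  have hilr : ∀ i : Fin r, 1 ≤ (i : ℕ) + 1 ∧ (i : ℕ) + 1 ≤ r := fun i => by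
    have := i.isLt; omega
  have hSA : ∀ (i : Fin r) (k : ℤ),
      {n : ℕ | ((i : ℕ) + 1) * n ∈
        AMjZ w ((((d i).support.card : ℝ) * ‖d i k‖ + 1) / (ρU / 2)) k} ∈ F := fun i k =>
    (h ((i : ℕ) + 1) (hilr i).1 (hilr i).2 _ (by positivity) k).1
  have hSB : ∀ (i : Fin r) (k : ℤ),
      {n : ℕ | ((i : ℕ) + 1) * n ∈
        AbarMjZ w ((((c i).support.card : ℝ) * ‖c i k‖ + 1) / (ρV / 2)) k} ∈ F := fun i k =>
    (h ((i : ℕ) + 1) (hilr i).1 (hilr i).2 _ (by positivity) k).2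
  have hG : {n : ℕ | ∀ i : Fin r,
      (∀ k ∈ (d i).support, ((i : ℕ) + 1) * n ∈
        AMjZ w ((((d i).support.card : ℝ) * ‖d i k‖ + 1) / (ρU / 2)) k) ∧
      (∀ k ∈ (c i).support, ((i : ℕ) + 1) * n ∈
        AbarMjZ w ((((c i).support.card : ℝ) * ‖c i k‖ + 1) / (ρV / 2)) k)} ∈ F := by
    have h1 : ∀ i : Fin r, {n : ℕ | ∀ k ∈ (d i).support, ((i : ℕ) + 1) * n ∈
        AMjZ w ((((d i).support.card : ℝ) * ‖d i k‖ + 1) / (ρU / 2)) k} ∈ F := fun i =>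
      fam_inter hne hup hcap (d i).support _ (fun k _ => hSA i k)
    have h2 : ∀ i : Fin r, {n : ℕ | ∀ k ∈ (c i).support, ((i : ℕ) + 1) * n ∈
        AbarMjZ w ((((c i).support.card : ℝ) * ‖c i k‖ + 1) / (ρV / 2)) k} ∈ F := fun i =>
      fam_inter hne hup hcap (c i).support _ (fun k _ => hSB i k)
    have h3 := fam_inter hne hup hcap (Finset.univ : Finset (Fin r)) _
      (fun i _ => hcap _ (h1 i) _ (h2 i))
    refine hup _ h3 _ ?_
    intro n hn i
    exact hn i (Finset.mem_univ i)
  refine hup _ hG _ ?_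
  intro n hn
  have hP0 : ∀ (i : Fin r) (k : ℤ),
      (∏ s ∈ Finset.Icc (k + 1) (k + ((((i : ℕ) + 1) * n : ℕ) : ℤ)), w s) ≠ 0 := fun i k =>
    Finset.prod_ne_zero_iff.mpr fun s _ => hw s
  refine ⟨fun i => a i + ∑ k ∈ (d i).support,
      ((d i k) / ∏ s ∈ Finset.Icc (k + 1) (k + ((((i : ℕ) + 1) * n : ℕ) : ℤ)), w s) •
        e (k + ((((i : ℕ) + 1) * n : ℕ) : ℤ)), ?_, ?_⟩
  · apply hU'
    intro i
    rw [add_sub_cancel_left]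
    refine norm_sum_corr_lt (d i).support (d i) _ _ (fun k => hen _) _ hεU ?_ ?_
    · intro k hk
      have h4 := (hn i).1 k hk
      simp only [Set.mem_setOf_eq, AMjZ] at h4
      rw [norm_prod]
      exact h4
    · intro k hk
      exact Finsupp.mem_support_iff.mp hk
  · apply hV'
    intro i
    rw [directSumPow_pow_apply]
    have hBz : (B ^ (((i : ℕ) + 1) * n)) (a i + ∑ k ∈ (d i).support,
        ((d i k) / ∏ s ∈ Finset.Icc (k + 1) (k + ((((i : ℕ) + 1) * n : ℕ) : ℤ)), w s) •
          e (k + ((((i : ℕ) + 1) * n : ℕ) : ℤ)))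
        = (B ^ (((i : ℕ) + 1) * n)) (a i) + b i := by
      rw [map_add]
      congr 1
      rw [map_sum]
      have hterm : ∀ k ∈ (d i).support,
          (B ^ (((i : ℕ) + 1) * n))
            (((d i k) / ∏ s ∈ Finset.Icc (k + 1) (k + ((((i : ℕ) + 1) * n : ℕ) : ℤ)), w s) •
              e (k + ((((i : ℕ) + 1) * n : ℕ) : ℤ))) = d i k • e k := by
        intro k hk
        rw [map_smul, pow_shift w e B hB]
        have h6 : k + ((((i : ℕ) + 1) * n : ℕ) : ℤ) - ((((i : ℕ) + 1) * n : ℕ) : ℤ) = k := by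
          ring
        rw [h6, smul_smul, div_mul_cancel₀ _ (hP0 i k)]
      rw [Finset.sum_congr rfl hterm]
      calc ∑ k ∈ (d i).support, d i k • e k = (d i).sum fun k t => t • e k := rfl
        _ = b i := hdsum i
    rw [hBz, add_sub_cancel_right]
    have hai : a i = ∑ k ∈ (c i).support, c i k • e k := ((hcsum i).symm : _)
    rw [hai, map_sum]
    have hterm2 : ∀ k ∈ (c i).support,
        (B ^ (((i : ℕ) + 1) * n)) (c i k • e k)
          = c i k • ((∏ s ∈ Finset.Icc (k - ((((i : ℕ) + 1) * n : ℕ) : ℤ) + 1) k, w s) •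
              e (k - ((((i : ℕ) + 1) * n : ℕ) : ℤ))) := by
      intro k hk
      rw [map_smul, pow_shift w e B hB]
    rw [Finset.sum_congr rfl hterm2]
    refine norm_sum_term_lt (c i).support (c i) _ _ (fun k => hen _) _ hεV ?_ ?_
    · intro k hk
      have h4 := (hn i).2 k hk
      simp only [Set.mem_setOf_eq, AbarMjZ] at h4
      rw [one_div_div] at h4
      rw [norm_prod]
      exact h4
    · intro k hk
      exact Finsupp.mem_support_iff.mp hk

set_option maxHeartbeats 1000000 in
theorem abstract_backward
    (F : Set (Set ℕ))
    (hup : ∀ A ∈ F, ∀ B : Set ℕ, A ⊆ B → B ∈ F)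
    (r : ℕ) (w : ℤ → ℂ)
    (e : ℤ → X) (f : ℤ → X →L[ℂ] ℂ)
    (hfe : ∀ j k, f j (e k) = if k = j then 1 else 0)
    (hfn : ∀ j x, ‖f j x‖ ≤ ‖x‖)
    (hd : Dense ((Submodule.span ℂ (Set.range e) : Submodule ℂ X) : Set X))
    (B : X →L[ℂ] X) (hB : ∀ k, B (e k) = w k • e (k - 1))
    (hT : FOperator (· ∈ F) (directSumPow B r)) :
    ∀ l : ℕ, 1 ≤ l → l ≤ r → ∀ M > (0 : ℝ), ∀ j : ℤ,
      {k : ℕ | l * k ∈ AMjZ w M j} ∈ F ∧ {k : ℕ | l * k ∈ AbarMjZ w M j} ∈ F := by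
  intro l hl1 hlr M hM j
  have hil : l - 1 < r := by omega
  set i : Fin r := ⟨l - 1, hil⟩ with hi_def
  have hil1 : (i : ℕ) + 1 = l := by
    simp only [hi_def]
    omega
  constructor
  · -- A part
    have hδ : (0 : ℝ) < 1 / (2 * M) := by positivity
    have hUo : IsOpen ((fun z : Fin r → X => z i) ⁻¹' Metric.ball 0 (1 / (2 * M))) :=
      (continuous_apply i).isOpen_preimage _ Metric.isOpen_ball
    have hVo : IsOpen ((fun z : Fin r → X => z i) ⁻¹' Metric.ball (e j) (1 / 2)) :=
      (continuous_apply i).isOpen_preimage _ Metric.isOpen_ball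
    have hUne : ((fun z : Fin r → X => z i) ⁻¹' Metric.ball 0 (1 / (2 * M))).Nonempty :=
      ⟨0, by simp [Metric.mem_ball, hδ, hM]⟩
    have hVne : ((fun z : Fin r → X => z i) ⁻¹' Metric.ball (e j) (1 / 2)).Nonempty :=
      ⟨fun _ => e j, by simp [Metric.mem_ball]⟩
    have hmem := hT _ _ hUo hVo hUne hVne
    refine hup _ hmem _ ?_
    rintro n ⟨x, hxU, hxV⟩
    simp only [Set.mem_preimage, Metric.mem_ball, dist_zero_right, dist_eq_norm, sub_zero] at hxU hxV
    rw [directSumPow_pow_apply, hil1] at hxV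
    set t : ℂ := f j ((B ^ (l * n)) (x i)) with ht_def
    have h1 : ‖t - 1‖ < 1 / 2 := by
      have h0 : t - 1 = f j ((B ^ (l * n)) (x i) - e j) := by
        rw [map_sub, hfe, if_pos rfl, ht_def]
      rw [h0]
      exact lt_of_le_of_lt (hfn _ _) hxV
    have ht : 1 / 2 < ‖t‖ := by
      have h2 := norm_sub_norm_le (1 : ℂ) t
      rw [norm_one, norm_sub_rev] at h2
      linarith
    have h3 : t = (∏ s ∈ Finset.Icc (j + 1) (j + ((l * n : ℕ) : ℤ)), w s)
        * f (j + (l * n : ℕ)) (x i) := coord_pow w e f hfe hd B hB (l * n) j (x i)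
    have h4 : ‖f (j + ((l * n : ℕ) : ℤ)) (x i)‖ < 1 / (2 * M) :=
      lt_of_le_of_lt (hfn _ _) hxU
    show M < ∏ s ∈ Finset.Icc (j + 1) (j + ((l * n : ℕ) : ℤ)), ‖w s‖
    rw [← norm_prod]
    by_contra hcon
    push_neg at hcon
    have h5 : ‖t‖ = ‖∏ s ∈ Finset.Icc (j + 1) (j + ((l * n : ℕ) : ℤ)), w s‖
        * ‖f (j + ((l * n : ℕ) : ℤ)) (x i)‖ := by rw [h3, norm_mul]
    have h6 : ‖t‖ ≤ M * ‖f (j + ((l * n : ℕ) : ℤ)) (x i)‖ := by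
      rw [h5]
      exact mul_le_mul_of_nonneg_right hcon (norm_nonneg _)
    have h7 : M * ‖f (j + ((l * n : ℕ) : ℤ)) (x i)‖ < M * (1 / (2 * M)) :=
      mul_lt_mul_of_pos_left h4 hM
    have h8 : M * (1 / (2 * M)) = 1 / 2 := by field_simp
    linarith
  · -- Abar part
    have hδ : (0 : ℝ) < 1 / (2 * M) := by positivity
    have hUo : IsOpen ((fun z : Fin r → X => z i) ⁻¹' Metric.ball (e j) (1 / 2)) :=
      (continuous_apply i).isOpen_preimage _ Metric.isOpen_ball
    have hVo : IsOpen ((fun z : Fin r → X => z i) ⁻¹' Metric.ball 0 (1 / (2 * M))) :=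
      (continuous_apply i).isOpen_preimage _ Metric.isOpen_ball
    have hUne : ((fun z : Fin r → X => z i) ⁻¹' Metric.ball (e j) (1 / 2)).Nonempty :=
      ⟨fun _ => e j, by simp [Metric.mem_ball]⟩
    have hVne : ((fun z : Fin r → X => z i) ⁻¹' Metric.ball 0 (1 / (2 * M))).Nonempty :=
      ⟨0, by simp [Metric.mem_ball, hδ, hM]⟩
    have hmem := hT _ _ hUo hVo hUne hVne
    refine hup _ hmem _ ?_
    rintro n ⟨x, hxU, hxV⟩
    simp only [Set.mem_preimage, Metric.mem_ball, dist_zero_right, dist_eq_norm, sub_zero] at hxU hxV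
    rw [directSumPow_pow_apply, hil1] at hxV
    set t : ℂ := f j (x i) with ht_def
    have h1 : ‖t - 1‖ < 1 / 2 := by
      have h0 : t - 1 = f j (x i - e j) := by
        rw [map_sub, hfe, if_pos rfl, ht_def]
      rw [h0]
      exact lt_of_le_of_lt (hfn _ _) hxU
    have ht : 1 / 2 < ‖t‖ := by
      have h2 := norm_sub_norm_le (1 : ℂ) t
      rw [norm_one, norm_sub_rev] at h2
      linarith
    have h3 : f (j - ((l * n : ℕ) : ℤ)) ((B ^ (l * n)) (x i))
        = (∏ s ∈ Finset.Icc (j - ((l * n : ℕ) : ℤ) + 1)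
            (j - ((l * n : ℕ) : ℤ) + ((l * n : ℕ) : ℤ)), w s)
          * f (j - ((l * n : ℕ) : ℤ) + ((l * n : ℕ) : ℤ)) (x i) :=
      coord_pow w e f hfe hd B hB (l * n) _ (x i)
    have hj : j - ((l * n : ℕ) : ℤ) + ((l * n : ℕ) : ℤ) = j := by ring
    rw [hj] at h3
    have h4 : ‖f (j - ((l * n : ℕ) : ℤ)) ((B ^ (l * n)) (x i))‖ < 1 / (2 * M) :=
      lt_of_le_of_lt (hfn _ _) hxV
    show (∏ s ∈ Finset.Icc (j - ((l * n : ℕ) : ℤ) + 1) j, ‖w s‖) < 1 / M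
    rw [← norm_prod]
    by_contra hcon
    push_neg at hcon
    have hQ0 : (0 : ℝ) < ‖∏ s ∈ Finset.Icc (j - ((l * n : ℕ) : ℤ) + 1) j, w s‖ :=
      lt_of_lt_of_le (by positivity) hcon
    have h5 : ‖f (j - ((l * n : ℕ) : ℤ)) ((B ^ (l * n)) (x i))‖
        = ‖∏ s ∈ Finset.Icc (j - ((l * n : ℕ) : ℤ) + 1) j, w s‖ * ‖t‖ := by
      rw [h3, norm_mul, ht_def]
    have h6 : (1 / M) * (1 / 2)
        < ‖∏ s ∈ Finset.Icc (j - ((l * n : ℕ) : ℤ) + 1) j, w s‖ * ‖t‖ := by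
      calc (1 / M) * (1 / 2)
          ≤ ‖∏ s ∈ Finset.Icc (j - ((l * n : ℕ) : ℤ) + 1) j, w s‖ * (1 / 2) :=
            mul_le_mul_of_nonneg_right hcon (by norm_num)
        _ < _ := mul_lt_mul_of_pos_left ht hQ0
    have h7 : (1 / M) * (1 / 2) = 1 / (2 * M) := by rw [div_mul_div_comm, one_mul]; ring_nf
    linarith
end Abs

noncomputable def c0Coord (j : ℤ) : ZeroAtInftyContinuousMap ℤ ℂ →L[ℂ] ℂ :=
  LinearMap.mkContinuous
    { toFun := fun x => x j
      map_add' := fun x y => rfl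
      map_smul' := fun c x => rfl } 1
    (fun x => by
      rw [one_mul]
      calc ‖x j‖ = ‖x.toBCF j‖ := rfl
        _ ≤ ‖x.toBCF‖ := BoundedContinuousFunction.norm_coe_le_norm _ _
        _ = ‖x‖ := ZeroAtInftyContinuousMap.norm_toBCF_eq_norm)

lemma c0Coord_apply (j : ℤ) (x : ZeroAtInftyContinuousMap ℤ ℂ) : c0Coord j x = x j := rfl

lemma c0_fn (j : ℤ) (x : ZeroAtInftyContinuousMap ℤ ℂ) : ‖c0Coord j x‖ ≤ ‖x‖ := by
  rw [c0Coord_apply]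
  calc ‖x j‖ = ‖x.toBCF j‖ := rfl
    _ ≤ ‖x.toBCF‖ := BoundedContinuousFunction.norm_coe_le_norm _ _
    _ = ‖x‖ := ZeroAtInftyContinuousMap.norm_toBCF_eq_norm

lemma c0_fe (j k : ℤ) :
    c0Coord j (c0Single k) = if k = j then 1 else 0 := by
  rw [c0Coord_apply]
  show (if j = k then (1 : ℂ) else 0) = if k = j then 1 else 0
  by_cases h : k = j
  · subst h; simp
  · rw [if_neg h, if_neg (Ne.symm h)]

lemma c0_norm_single_le (k : ℤ) : ‖(c0Single k : ZeroAtInftyContinuousMap ℤ ℂ)‖ ≤ 1 := by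
  rw [← ZeroAtInftyContinuousMap.norm_toBCF_eq_norm]
  refine (BoundedContinuousFunction.norm_le (by norm_num)).mpr ?_
  intro m
  show ‖if m = k then (1 : ℂ) else 0‖ ≤ 1
  by_cases h : m = k <;> simp [h]

lemma c0_dense :
    Dense ((Submodule.span ℂ (Set.range (c0Single : ℤ → ZeroAtInftyContinuousMap ℤ ℂ)) :
      Submodule ℂ _) : Set (ZeroAtInftyContinuousMap ℤ ℂ)) := by
  rw [Metric.dense_iff]
  intro x ρ hρ
  classical
  have hx := x.zero_at_infty'
  rw [Filter.cocompact_eq_cofinite] at hx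
  have hfin : {m : ℤ | ρ / 2 ≤ ‖x m‖}.Finite := by
    have h1 : {m : ℤ | x m ∈ Metric.ball 0 (ρ / 2)} ∈ Filter.cofinite :=
      hx (Metric.ball_mem_nhds 0 (by positivity))
    rw [Filter.mem_cofinite] at h1
    refine h1.subset ?_
    intro m hm
    simp only [Set.mem_compl_iff, Set.mem_setOf_eq, Metric.mem_ball, dist_zero_right]
    simp only [Set.mem_setOf_eq] at hm
    exact not_lt.mpr hm
  set s := hfin.toFinset with hs_def
  set g : ZeroAtInftyContinuousMap ℤ ℂ := ∑ m ∈ s, x m • c0Single m with hg_def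
  have hg : g ∈ Submodule.span ℂ (Set.range (c0Single : ℤ → ZeroAtInftyContinuousMap ℤ ℂ)) :=
    Submodule.sum_mem _ fun m _ => Submodule.smul_mem _ _ (Submodule.subset_span ⟨m, rfl⟩)
  have hval : ∀ m : ℤ, g m = if m ∈ s then x m else 0 := by
    intro m
    have h2 : g m = c0Coord m g := rfl
    rw [h2, hg_def, map_sum]
    have h3 : ∀ m' ∈ s, c0Coord m (x m' • c0Single m')
        = if m' = m then x m' else 0 := by
      intro m' _
      rw [map_smul, c0_fe]
      by_cases h : m' = m <;> simp [h]
    rw [Finset.sum_congr rfl h3, Finset.sum_ite_eq' s m (fun m' => x m')]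
  refine ⟨g, Metric.mem_ball.mpr ?_, hg⟩
  have hle : dist g x ≤ ρ / 2 := by
    rw [dist_eq_norm, ← ZeroAtInftyContinuousMap.norm_toBCF_eq_norm]
    refine (BoundedContinuousFunction.norm_le (by positivity)).mpr ?_
    intro m
    show ‖(g - x) m‖ ≤ ρ / 2
    have h4 : (g - x) m = g m - x m := rfl
    rw [h4, hval]
    by_cases h : m ∈ s
    · rw [if_pos h, sub_self, norm_zero]; positivity
    · rw [if_neg h, zero_sub, norm_neg]
      have h5 : ¬ (ρ / 2 ≤ ‖x m‖) := by
        intro h6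
        exact h (by rw [hs_def]; exact hfin.mem_toFinset.mpr h6)
      linarith [not_le.mp h5]
  linarith

noncomputable def lpCoord (p : ℝ≥0∞) [Fact (1 ≤ p)] (j : ℤ) :
    lp (fun _ : ℤ => ℂ) p →L[ℂ] ℂ :=
  LinearMap.mkContinuous
    { toFun := fun x => x j
      map_add' := fun x y => by
        show (⇑(x + y)) j = (⇑x) j + (⇑y) j
        rw [lp.coeFn_add]; rfl
      map_smul' := fun c x => by
        show (⇑(c • x)) j = c * (⇑x) j
        rw [lp.coeFn_smul]; rfl } 1
    (fun x => by
      rw [one_mul]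
      exact lp.norm_apply_le_norm
        ((lt_of_lt_of_le zero_lt_one Fact.out).ne' : p ≠ 0) x j)

lemma lpCoord_apply (p : ℝ≥0∞) [Fact (1 ≤ p)] (j : ℤ) (x : lp (fun _ : ℤ => ℂ) p) :
    lpCoord p j x = x j := rfl

lemma lp_fn (p : ℝ≥0∞) [Fact (1 ≤ p)] (j : ℤ) (x : lp (fun _ : ℤ => ℂ) p) :
    ‖lpCoord p j x‖ ≤ ‖x‖ := by
  rw [lpCoord_apply]
  exact lp.norm_apply_le_norm ((lt_of_lt_of_le zero_lt_one Fact.out).ne' : p ≠ 0) x j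

lemma lp_fe (p : ℝ≥0∞) [Fact (1 ≤ p)] (j k : ℤ) :
    lpCoord p j (lp.single p k (1 : ℂ)) = if k = j then 1 else 0 := by
  rw [lpCoord_apply]
  by_cases h : k = j
  · subst h; rw [if_pos rfl]; exact lp.single_apply_self p k 1
  · rw [if_neg h]; exact lp.single_apply_ne p k 1 (Ne.symm h)

lemma lp_norm_single_le (p : ℝ≥0∞) [Fact (1 ≤ p)] (hp : p ≠ ∞) (k : ℤ) :
    ‖(lp.single p k (1 : ℂ) : lp (fun _ : ℤ => ℂ) p)‖ ≤ 1 := by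
  have hp0 : 0 < p.toReal :=
    ENNReal.toReal_pos ((lt_of_lt_of_le zero_lt_one Fact.out).ne' : p ≠ 0) hp
  have := lp.norm_single (E := fun _ : ℤ => ℂ) (lt_of_lt_of_le zero_lt_one Fact.out : 0 < p) k (1 : ℂ)
  rw [this]
  simp

lemma lp_dense (p : ℝ≥0∞) [Fact (1 ≤ p)] (hp : p ≠ ∞) :
    Dense ((Submodule.span ℂ (Set.range (fun k : ℤ => lp.single p k (1 : ℂ))) :
      Submodule ℂ _) : Set (lp (fun _ : ℤ => ℂ) p)) := by
  intro x
  refine mem_closure_of_tendsto (lp.hasSum_single hp x) ?_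
  filter_upwards with s
  refine Submodule.sum_mem _ fun k _ => ?_
  have h1 : lp.single p k (x k)
      = (x k) • (lp.single p k (1 : ℂ) : lp (fun _ : ℤ => ℂ) p) := by
    apply lp.ext
    funext j
    rw [lp.coeFn_smul, Pi.smul_apply]
    by_cases h : j = k
    · subst h
      rw [lp.single_apply_self, lp.single_apply_self, smul_eq_mul, mul_one]
    · rw [lp.single_apply_ne p k _ h, lp.single_apply_ne p k _ h, smul_zero]
  rw [h1]
  exact Submodule.smul_mem _ _ (Submodule.subset_span ⟨k, rfl⟩)


theorem stmt9 (F : Set (Set ℕ)) (_hne : F.Nonempty)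
    (_hinf : ∀ A ∈ F, A.Infinite)
    (_hup : ∀ A ∈ F, ∀ B : Set ℕ, A ⊆ B → B ∈ F)
    (_hcap : ∀ A ∈ F, ∀ B ∈ F, A ∩ B ∈ F)
    (r : ℕ) :
    (∀ w : ℤ → ℂ, (∀ k, w k ≠ 0) → BddWeight w →
      ∀ B : ZeroAtInftyContinuousMap ℤ ℂ →L[ℂ] ZeroAtInftyContinuousMap ℤ ℂ,
        IsBilateralWeightedShift c0Single w B →
        ((∀ l : ℕ, 1 ≤ l → l ≤ r → ∀ M > (0 : ℝ), ∀ j : ℤ,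
            {k : ℕ | l * k ∈ AMjZ w M j} ∈ F ∧ {k : ℕ | l * k ∈ AbarMjZ w M j} ∈ F) ↔
          FOperator (· ∈ F) (directSumPow B r))) ∧
    ∀ (p : ℝ≥0∞) [Fact (1 ≤ p)], p ≠ ∞ →
      ∀ w : ℤ → ℂ, (∀ k, w k ≠ 0) → BddWeight w →
      ∀ B : lp (fun _ : ℤ => ℂ) p →L[ℂ] lp (fun _ : ℤ => ℂ) p,
        IsBilateralWeightedShift (fun k => lp.single p k 1) w B →
        ((∀ l : ℕ, 1 ≤ l → l ≤ r → ∀ M > (0 : ℝ), ∀ j : ℤ,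
            {k : ℕ | l * k ∈ AMjZ w M j} ∈ F ∧ {k : ℕ | l * k ∈ AbarMjZ w M j} ∈ F) ↔
          FOperator (· ∈ F) (directSumPow B r)) := by
  constructor
  · intro w hw _hbdd B hB
    constructor
    · intro h
      exact abstract_forward F _hne _hup _hcap r w hw c0Single c0Coord c0_fe c0_fn
        c0_norm_single_le c0_dense B hB h
    · intro hT
      exact abstract_backward F _hup r w c0Single c0Coord c0_fe c0_fn c0_dense B hB hT
  · intro p _inst hp w hw _hbdd B hB
    constructor
    · intro h
      exact abstract_forward F _hne _hup _hcap r w hw (fun k => lp.single p k 1)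
        (lpCoord p) (lp_fe p) (lp_fn p) (lp_norm_single_le p hp) (lp_dense p hp) B hB h
    · intro hT
      exact abstract_backward F _hup r w (fun k => lp.single p k 1) (lpCoord p)
        (lp_fe p) (lp_fn p) (lp_dense p hp) B hB hT
end

section
/- Let w = (w_k)_{k∈ℤ} be a bounded bilateral weight and B_w the bilateral weighted backward shift on X = ℓ^p(ℤ) (1 ≤ p < ∞) or c₀(ℤ). If B_w is topologically 𝒟-recurrent, then for every r ∈ ℕ, every M > 0, every j ∈ ℤ and every 1 ≤ l ≤ r, one has A_{M;j} ∈ l𝒟* and Ā_{M;j} ∈ l𝒟*. -/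
open Filter Topology
open scoped ENNReal

set_option linter.unusedSectionVars false
set_option linter.unusedVariables false

open Classical in
lemma blockCount_eq_filter (A : Set ℕ) (k s : ℕ) :
    blockCount A k s = ((Finset.Icc (k+1) (k+s)).filter (· ∈ A)).card := by
  classical
  rw [blockCount]
  have h : (A ∩ Set.Icc (k + 1) (k + s) : Set ℕ)
      = (((Finset.Icc (k+1) (k+s)).filter (· ∈ A)) : Finset ℕ) := by
    ext n; simp [Set.mem_Icc]; tauto
  rw [h, Nat.card_coe_set_eq, Set.ncard_coe_finset]

lemma blockCount_le (A : Set ℕ) (k s : ℕ) : blockCount A k s ≤ s := by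
  classical
  rw [blockCount_eq_filter]
  calc ((Finset.Icc (k+1) (k+s)).filter (· ∈ A)).card ≤ (Finset.Icc (k+1) (k+s)).card :=
        Finset.card_filter_le _ _
    _ = s := by rw [Nat.card_Icc]; omega

lemma blockCount_mono {A B : Set ℕ} (h : A ⊆ B) (k s : ℕ) :
    blockCount A k s ≤ blockCount B k s := by
  classical
  rw [blockCount_eq_filter, blockCount_eq_filter]
  apply Finset.card_le_card
  intro n hn
  rw [Finset.mem_filter] at *
  exact ⟨hn.1, h hn.2⟩

lemma blockCount_mono_s (A : Set ℕ) (k : ℕ) {s t : ℕ} (h : s ≤ t) :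
    blockCount A k s ≤ blockCount A k t := by
  classical
  rw [blockCount_eq_filter, blockCount_eq_filter]
  apply Finset.card_le_card
  intro n hn
  rw [Finset.mem_filter, Finset.mem_Icc] at *
  exact ⟨by omega, hn.2⟩

lemma bc_bddAbove (A : Set ℕ) (s : ℕ) :
    IsBoundedUnder (· ≤ ·) atTop (fun k : ℕ => (blockCount A k s : ℝ)) :=
  Filter.isBoundedUnder_of ⟨(s : ℝ), fun k => by exact_mod_cast blockCount_le A k s⟩

lemma bc_bddBelow (A : Set ℕ) (s : ℕ) :
    IsBoundedUnder (· ≥ ·) atTop (fun k : ℕ => (blockCount A k s : ℝ)) :=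
  Filter.isBoundedUnder_of ⟨(0 : ℝ), fun k => by positivity⟩

lemma inner_limsup_nonneg (A : Set ℕ) (s : ℕ) :
    0 ≤ Filter.limsup (fun k : ℕ => (blockCount A k s : ℝ)) Filter.atTop :=
  le_limsup_of_frequently_le (Filter.Frequently.of_forall fun k => by positivity) (bc_bddAbove A s)

lemma inner_limsup_le (A : Set ℕ) (s : ℕ) :
    Filter.limsup (fun k : ℕ => (blockCount A k s : ℝ)) Filter.atTop ≤ s :=
  limsup_le_of_le (bc_bddBelow A s).isCoboundedUnder_flip
    (Filter.Eventually.of_forall fun k => by exact_mod_cast blockCount_le A k s)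

lemma g_nonneg (A : Set ℕ) (s : ℕ) :
    0 ≤ (Filter.limsup (fun k : ℕ => (blockCount A k s : ℝ)) Filter.atTop) / s := by
  apply div_nonneg (inner_limsup_nonneg A s) (by positivity)

lemma g_le_one (A : Set ℕ) (s : ℕ) :
    (Filter.limsup (fun k : ℕ => (blockCount A k s : ℝ)) Filter.atTop) / s ≤ 1 := by
  rcases Nat.eq_zero_or_pos s with h | h
  · subst h; simp
  · rw [div_le_one (by exact_mod_cast h)]
    exact inner_limsup_le A s

/-- extraction -/
lemma uBD_pos_extract {A : Set ℕ} (h : 0 < upperBanachDensity A) :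
    ∃ δ : ℝ, 0 < δ ∧ ∃ᶠ s : ℕ in atTop, 1 ≤ s ∧
      ∃ᶠ k : ℕ in atTop, δ * s ≤ (blockCount A k s : ℝ) := by
  set L := upperBanachDensity A with hL
  refine ⟨L/2, by linarith, ?_⟩
  have hfreq : ∃ᶠ s : ℕ in atTop,
      L/2 < (Filter.limsup (fun k : ℕ => (blockCount A k s : ℝ)) Filter.atTop) / s := by
    apply Filter.frequently_lt_of_lt_limsup
    · exact Filter.IsBoundedUnder.isCoboundedUnder_flip
        (Filter.isBoundedUnder_of ⟨(0:ℝ), fun s => g_nonneg A s⟩)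
    · have : upperBanachDensity A = Filter.limsup (fun s : ℕ =>
        (Filter.limsup (fun k : ℕ => (blockCount A k s : ℝ)) Filter.atTop) / s) Filter.atTop := rfl
      rw [← this]; linarith
  refine ((hfreq.and_eventually (Filter.eventually_ge_atTop 1)).mono ?_)
  rintro s ⟨hs, hs1⟩
  refine ⟨hs1, ?_⟩
  have hspos : (0:ℝ) < s := by exact_mod_cast hs1
  have hlt : L/2 * s < Filter.limsup (fun k : ℕ => (blockCount A k s : ℝ)) Filter.atTop := by
    rw [lt_div_iff₀ hspos] at hs; linarith
  have := Filter.frequently_lt_of_lt_limsup (bc_bddBelow A s).isCoboundedUnder_flip hlt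
  exact this.mono fun k hk => le_of_lt hk

/-- building -/
lemma uBD_pos_build {A : Set ℕ} {δ : ℝ} (hδ : 0 < δ)
    (h : ∃ᶠ s : ℕ in atTop, 1 ≤ s ∧ ∃ᶠ k : ℕ in atTop, δ * s ≤ (blockCount A k s : ℝ)) :
    0 < upperBanachDensity A := by
  have key : δ ≤ upperBanachDensity A := by
    unfold upperBanachDensity
    apply le_limsup_of_frequently_le
    · refine h.mono ?_
      rintro s ⟨hs1, hfk⟩
      have hspos : (0:ℝ) < s := by exact_mod_cast hs1
      have hle : δ * s ≤ Filter.limsup (fun k : ℕ => (blockCount A k s : ℝ)) Filter.atTop :=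
        le_limsup_of_frequently_le hfk (bc_bddAbove A s)
      rw [le_div_iff₀ hspos]; linarith
    · exact Filter.isBoundedUnder_of ⟨(1:ℝ), fun s => g_le_one A s⟩
  linarith

lemma uBD_pos_mono {A B : Set ℕ} (h : A ⊆ B) (hA : 0 < upperBanachDensity A) :
    0 < upperBanachDensity B := by
  obtain ⟨δ, hδ, hf⟩ := uBD_pos_extract hA
  apply uBD_pos_build hδ
  refine hf.mono ?_
  rintro s ⟨hs1, hfk⟩
  refine ⟨hs1, hfk.mono fun k hk => ?_⟩
  calc δ * s ≤ (blockCount A k s : ℝ) := hk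
    _ ≤ (blockCount B k s : ℝ) := by exact_mod_cast blockCount_mono h k s

lemma infinite_of_uBD_pos {A : Set ℕ} (hA : 0 < upperBanachDensity A) : A.Infinite := by
  by_contra hfin
  rw [Set.not_infinite] at hfin
  obtain ⟨δ, hδ, hf⟩ := uBD_pos_extract hA
  obtain ⟨n₀, hn₀⟩ : ∃ n₀ : ℕ, ∀ a ∈ A, a ≤ n₀ := by
    rcases hfin.bddAbove with ⟨n₀, hb⟩
    exact ⟨n₀, fun a ha => hb ha⟩
  obtain ⟨s, hs1, hfk⟩ := hf.exists
  obtain ⟨k, hk, hkc⟩ := (hfk.and_eventually (Filter.eventually_ge_atTop (n₀+1))).exists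
  have hz : blockCount A k s = 0 := by
    classical
    rw [blockCount_eq_filter, Finset.card_eq_zero, Finset.filter_eq_empty_iff]
    intro n hn hnA
    rw [Finset.mem_Icc] at hn
    have := hn₀ n hnA
    omega
  rw [hz] at hk
  have hs1' : (1:ℝ) ≤ s := by exact_mod_cast hs1
  push_cast at hk
  nlinarith

/-- pigeonhole over residues: frequency swap helper -/
lemma frequently_exists_lt {l : ℕ} {P : ℕ → ℕ → Prop}
    (h : ∃ᶠ k : ℕ in atTop, ∃ c < l, P c k) : ∃ c < l, ∃ᶠ k : ℕ in atTop, P c k := by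
  by_contra hc
  push_neg at hc
  have hev : ∀ᶠ k : ℕ in atTop, ∀ c ∈ Finset.range l, ¬ P c k :=
    (Filter.eventually_all_finset _).mpr fun c hc' => by
      have := hc c (Finset.mem_range.mp hc')
      exact this
  obtain ⟨k, ⟨c, hcl, hP⟩, hall⟩ := (h.and_eventually hev).exists
  exact hall c (Finset.mem_range.mpr hcl) hP

open Classical in
lemma uBD_pos_residue {D : Set ℕ} {l : ℕ} (hl : 1 ≤ l) (hD : 0 < upperBanachDensity D) :
    ∃ c < l, 0 < upperBanachDensity {n | n ∈ D ∧ n % l = c} := by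
  obtain ⟨δ, hδ, hf⟩ := uBD_pos_extract hD
  have hlR : (0:ℝ) < l := by exact_mod_cast hl
  have key : ∃ᶠ s : ℕ in atTop, 1 ≤ s ∧ ∃ c < l, ∃ᶠ k : ℕ in atTop,
      (δ/l) * s ≤ (blockCount {n | n ∈ D ∧ n % l = c} k s : ℝ) := by
    refine hf.mono ?_
    rintro s ⟨hs1, hfk⟩
    refine ⟨hs1, ?_⟩
    apply frequently_exists_lt
    refine hfk.mono fun k hk => ?_
    -- pigeonhole at fixed (k,s)
    by_contra hno
    push_neg at hno
    have hsumN : blockCount D k s ≤ ∑ c ∈ Finset.range l, blockCount {n | n ∈ D ∧ n % l = c} k s := by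
      rw [blockCount_eq_filter]
      calc ((Finset.Icc (k+1) (k+s)).filter (· ∈ D)).card
          ≤ (Finset.range l |>.biUnion (fun c => (Finset.Icc (k+1) (k+s)).filter (· ∈ {n | n ∈ D ∧ n % l = c}))).card := by
            apply Finset.card_le_card
            intro n hn
            rw [Finset.mem_filter] at hn
            rw [Finset.mem_biUnion]
            exact ⟨n % l, Finset.mem_range.mpr (Nat.mod_lt _ (by omega)), by
              rw [Finset.mem_filter]; exact ⟨hn.1, hn.2, rfl⟩⟩
        _ ≤ ∑ c ∈ Finset.range l, ((Finset.Icc (k+1) (k+s)).filter (· ∈ {n | n ∈ D ∧ n % l = c})).card :=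
            Finset.card_biUnion_le
        _ = ∑ c ∈ Finset.range l, blockCount {n | n ∈ D ∧ n % l = c} k s := by
            refine Finset.sum_congr rfl fun c _ => ?_
            rw [blockCount_eq_filter]
            congr
    have hsum : (blockCount D k s : ℝ) ≤ ∑ c ∈ Finset.range l, (blockCount {n | n ∈ D ∧ n % l = c} k s : ℝ) := by
      exact_mod_cast hsumN
    have hlt : ∑ c ∈ Finset.range l, (blockCount {n | n ∈ D ∧ n % l = c} k s : ℝ)
        < ∑ c ∈ Finset.range l, (δ/l) * s := by
      apply Finset.sum_lt_sum_of_nonempty ⟨0, Finset.mem_range.mpr (by omega)⟩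
      intro c hc
      exact hno c (Finset.mem_range.mp hc)
    rw [Finset.sum_const, Finset.card_range, nsmul_eq_mul] at hlt
    have : (l:ℝ) * ((δ/l)*s) = δ * s := by field_simp
    rw [this] at hlt
    linarith
  -- swap the ∃ c outside the frequently over s
  have key2 : ∃ c < l, ∃ᶠ s : ℕ in atTop, 1 ≤ s ∧ ∃ᶠ k : ℕ in atTop,
      (δ/l) * s ≤ (blockCount {n | n ∈ D ∧ n % l = c} k s : ℝ) := by
    have := frequently_exists_lt (P := fun c s => 1 ≤ s ∧ ∃ᶠ k : ℕ in atTop,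
      (δ/l) * s ≤ (blockCount {n | n ∈ D ∧ n % l = c} k s : ℝ)) (l := l) ?_
    · exact this
    · refine key.mono ?_
      rintro s ⟨hs1, c, hcl, hfk⟩
      exact ⟨c, hcl, hs1, hfk⟩
  obtain ⟨c, hcl, hff⟩ := key2
  exact ⟨c, hcl, uBD_pos_build (by positivity) hff⟩

open Classical in
lemma uBD_pos_scale {D : Set ℕ} {l c : ℕ} (hl : 1 ≤ l) (hc : ∀ n ∈ D, n % l = c)
    (hD : 0 < upperBanachDensity D) : 0 < upperBanachDensity {m | c + l * m ∈ D} := by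
  obtain ⟨δ, hδ, hf⟩ := uBD_pos_extract hD
  apply uBD_pos_build hδ
  refine hf.mono ?_
  rintro s ⟨hs1, hfk⟩
  refine ⟨hs1, ?_⟩
  rw [Filter.frequently_atTop] at hfk ⊢
  intro k₀
  obtain ⟨K, hK, hKc⟩ := hfk (c + l * (k₀ + 1))
  have hl0 : 0 < l := by omega
  have hKc' : c ≤ K := by
    have : l * (k₀ + 1) ≥ 0 := Nat.zero_le _
    omega
  have r_def : l * ((K-c)/l) + (K - c) % l = K - c := Nat.div_add_mod (K-c) l
  have hKcc : K - c + c = K := Nat.sub_add_cancel hKc'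
  have hmodK : (K - c) % l < l := Nat.mod_lt _ hl0
  have hk'big : k₀ ≤ (K - c)/l := by
    have h1 : l * (k₀+1) ≤ K - c := by omega
    have h2 := Nat.div_le_div_right (c := l) h1
    rw [Nat.mul_div_cancel_left _ hl0] at h2
    omega
  refine ⟨(K - c)/l, hk'big, ?_⟩
  have hcount : blockCount D K s ≤ blockCount {m | c + l * m ∈ D} ((K-c)/l) s := by
    rw [blockCount_eq_filter, blockCount_eq_filter]
    apply Finset.card_le_card_of_injOn (fun n => n / l)
    · intro n hn
      rw [Finset.mem_coe, Finset.mem_filter, Finset.mem_Icc] at hn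
      obtain ⟨⟨hn1, hn2⟩, hnD⟩ := hn
      have hmod := hc n hnD
      have hdm := Nat.div_add_mod n l
      rw [hmod] at hdm
      have hcl : c < l := by
        have := Nat.mod_lt n hl0
        omega
      rw [Finset.mem_coe, Finset.mem_filter, Finset.mem_Icc]
      beta_reduce
      refine ⟨⟨?_, ?_⟩, ?_⟩
      · -- (K-c)/l + 1 ≤ n/l
        have h1 : K - c < l * (n / l) := by omega
        have : (K-c)/l < n/l := by
          rw [Nat.div_lt_iff_lt_mul hl0, mul_comm]
          exact h1
        omega
      · -- n/l ≤ (K-c)/l + s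
        have hls : l + s ≤ l * s + 1 := by
          have h1 : (1:ℤ) ≤ l := by exact_mod_cast hl
          have h2 : (1:ℤ) ≤ s := by exact_mod_cast hs1
          have : (l:ℤ) + s ≤ l * s + 1 := by nlinarith
          exact_mod_cast this
        have e : ((K-c)/l + s + 1) * l = l * ((K-c)/l) + l * s + l := by ring
        have hfin : n < ((K-c)/l + s + 1) * l := by omega
        have := (Nat.div_lt_iff_lt_mul hl0).mpr hfin
        omega
      · show c + l * (n / l) ∈ D
        have : c + l * (n/l) = n := by omega
        rw [this]; exact hnD
    · intro a ha b hb hab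
      rw [Finset.mem_coe, Finset.mem_filter] at ha hb
      have h1 := hc a ha.2
      have h2 := hc b hb.2
      simp only at hab
      have da := Nat.div_add_mod a l
      have db := Nat.div_add_mod b l
      rw [h1] at da; rw [h2] at db; rw [hab] at da
      omega
  calc δ * s ≤ (blockCount D K s : ℝ) := hKc
    _ ≤ _ := by exact_mod_cast hcount

open Classical in
lemma uBD_pigeonDiff {D : Set ℕ} (hD : 0 < upperBanachDensity D) :
    ∃ m : ℕ, 1 ≤ m ∧ ∀ s : ℕ → ℕ, (∀ i j, i < j → j ≤ m → s i < s j) →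
      ∃ i j, i < j ∧ j ≤ m ∧ ∃ d ∈ D, d + (s j - s i) ∈ D := by
  obtain ⟨δ, hδ, hf⟩ := uBD_pos_extract hD
  refine ⟨⌈2/δ⌉₊ + 1, by omega, ?_⟩
  intro s hs
  set m := ⌈2/δ⌉₊ + 1 with hm
  have hmδ : 2 + δ ≤ (m : ℝ) * δ := by
    have h2 : 2/δ ≤ (⌈2/δ⌉₊ : ℝ) := Nat.le_ceil _
    have : (m : ℝ) = (⌈2/δ⌉₊ : ℝ) + 1 := by push_cast [hm]; ring
    rw [this]
    rw [div_le_iff₀ hδ] at h2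
    nlinarith
  set S := s m with hS
  -- choose window length L ≥ S + 1 and K
  obtain ⟨L, hLS, hs1L, hfk⟩ : ∃ L, S + 1 ≤ L ∧ 1 ≤ L ∧ ∃ᶠ k : ℕ in atTop, δ * L ≤ (blockCount D k L : ℝ) := by
    rw [Filter.frequently_atTop] at hf
    obtain ⟨L, hL, h1, hfk⟩ := hf (S + 1)
    exact ⟨L, hL, h1, hfk⟩
  obtain ⟨K, hK⟩ := hfk.exists
  set W := (Finset.Icc (K+1) (K+L)).filter (· ∈ D) with hW
  have hWc : δ * L ≤ (W.card : ℝ) := by rwa [blockCount_eq_filter] at hK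
  set F : ℕ → Finset ℕ := fun i => W.image (· + s i) with hF
  have hFcard : ∀ i, (F i).card = W.card := fun i =>
    Finset.card_image_of_injective _ (add_left_injective (s i))
  have hFsub : ∀ i ≤ m, F i ⊆ Finset.Icc (K+1) (K+L+S) := by
    intro i hi x hx
    rw [hF, Finset.mem_image] at hx
    obtain ⟨w, hw, rfl⟩ := hx
    rw [hW, Finset.mem_filter, Finset.mem_Icc] at hw
    have hsi : s i ≤ S := by
      rcases Nat.eq_or_lt_of_le hi with h | h
      · subst h; omega
      · exact le_of_lt (hs i m h le_rfl)
    rw [Finset.mem_Icc]; omega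
  by_cases hdisj : ∀ i ∈ Finset.range (m+1), ∀ j ∈ Finset.range (m+1), i ≠ j → Disjoint (F i) (F j)
  · exfalso
    have hcard : ((Finset.range (m+1)).biUnion F).card = ∑ i ∈ Finset.range (m+1), (F i).card :=
      Finset.card_biUnion hdisj
    have hle : ((Finset.range (m+1)).biUnion F).card ≤ L + S := by
      calc ((Finset.range (m+1)).biUnion F).card ≤ (Finset.Icc (K+1) (K+L+S)).card := by
            apply Finset.card_le_card
            intro x hx
            rw [Finset.mem_biUnion] at hx
            obtain ⟨i, hi, hxi⟩ := hx
            exact hFsub i (by rw [Finset.mem_range] at hi; omega) hxi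
        _ = L + S := by rw [Nat.card_Icc]; omega
    have hsum : ∑ i ∈ Finset.range (m+1), (F i).card = (m+1) * W.card := by
      rw [Finset.sum_congr rfl fun i _ => hFcard i, Finset.sum_const, Finset.card_range, smul_eq_mul]
    rw [hcard, hsum] at hle
    have hR : ((m:ℝ)+1) * W.card ≤ L + S := by exact_mod_cast hle
    -- contradiction: (m+1) * Wcard ≥ (m+1) δ L ≥ (2+δ) L > L + S
    have hLR : (0:ℝ) < L := by exact_mod_cast hs1L
    have hSL : (S:ℝ) + 1 ≤ L := by exact_mod_cast hLS
    have hWnn : (0:ℝ) ≤ W.card := by positivity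
    nlinarith [hmδ, hWc, hR]
  · push_neg at hdisj
    obtain ⟨i, hi, j, hj, hij, hnd⟩ := hdisj
    rw [Finset.not_disjoint_iff] at hnd
    obtain ⟨x, hxi, hxj⟩ := hnd
    rw [hF, Finset.mem_image] at hxi hxj
    obtain ⟨d, hd, hdx⟩ := hxi
    obtain ⟨d', hd', hdx'⟩ := hxj
    rw [hW, Finset.mem_filter] at hd hd'
    rw [Finset.mem_range] at hi hj
    rcases Nat.lt_or_ge i j with h | h
    · have hsij : s i < s j := hs i j h (by omega)
      refine ⟨i, j, h, by omega, d', hd'.2, ?_⟩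
      have : d' + (s j - s i) = d := by omega
      rw [this]; exact hd.2
    · have h' : j < i := by omega
      have hsij : s j < s i := hs j i h' (by omega)
      refine ⟨j, i, h', by omega, d, hd.2, ?_⟩
      have : d + (s i - s j) = d' := by omega
      rw [this]; exact hd'.2

section Ultra
variable {q : Ultrafilter ℕ} (hq : IsEssentialIdempotent q)

lemma mem_infinite (hq : IsEssentialIdempotent q) {A : Set ℕ} (hA : A ∈ q) : A.Infinite :=
  infinite_of_uBD_pos (hq.2 A hA)

/-- Galvin-type chain lemma -/
lemma galvin_chain (hq : IsEssentialIdempotent q) (C : Set ℕ) (hC : C ∈ q) (m : ℕ) :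
    ∃ s : ℕ → ℕ, (∀ i j, i < j → j ≤ m → s i < s j) ∧ (∀ i j, i < j → j ≤ m → s j - s i ∈ C) := by
  suffices h : ∃ (s : ℕ → ℕ) (E : Set ℕ), E ∈ q ∧ E ⊆ C ∧
      (∀ i j, i < j → j ≤ m → s i < s j) ∧ (∀ i j, i < j → j ≤ m → s j - s i ∈ C) ∧
      (∀ i ≤ m, ∀ y ∈ E, (s m - s i) + y ∈ C) by
    obtain ⟨s, E, _, _, h1, h2, _⟩ := h
    exact ⟨s, h1, h2⟩
  induction m with
  | zero =>
    refine ⟨fun _ => 0, C, hC, subset_rfl, ?_, ?_, ?_⟩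
    · intro i j hij hj; omega
    · intro i j hij hj; omega
    · intro i hi y hy; simpa using hy
  | succ m ih =>
    obtain ⟨s, E, hEq, hEC, hmono, hdiff, hinv⟩ := ih
    -- pick y ∈ E with 1 ≤ y and {z | y + z ∈ E} ∈ q
    have hstar : {n : ℕ | {z : ℕ | n + z ∈ E} ∈ q} ∈ q := (hq.1 E).mp hEq
    have hinf : (E ∩ {n : ℕ | {z : ℕ | n + z ∈ E} ∈ q}).Infinite :=
      mem_infinite hq (inter_mem hEq hstar)
    obtain ⟨y, hy, hy1⟩ := hinf.exists_gt 0
    obtain ⟨hyE, hyshift⟩ := hy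
    set s' : ℕ → ℕ := fun i => if i ≤ m then s i else s m + y with hs'
    have hs'le : ∀ i ≤ m, s' i = s i := fun i hi => by simp [hs', hi]
    have hs'top : s' (m+1) = s m + y := by simp [hs']
    have hsmono : ∀ i ≤ m, s i ≤ s m := by
      intro i hi
      rcases Nat.eq_or_lt_of_le hi with h | h
      · exact h ▸ le_rfl
      · exact le_of_lt (hmono i m h le_rfl)
    refine ⟨s', E ∩ {z : ℕ | y + z ∈ E}, inter_mem hEq
      (by exact hyshift), fun z hz => hEC hz.1, ?_, ?_, ?_⟩
    · intro i j hij hj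
      rcases Nat.lt_or_ge j (m+1) with h | h
      · rw [hs'le i (by omega), hs'le j (by omega)]
        exact hmono i j hij (by omega)
      · have hj' : j = m + 1 := by omega
        subst hj'
        rw [hs'le i (by omega), hs'top]
        have := hsmono i (by omega)
        omega
    · intro i j hij hj
      rcases Nat.lt_or_ge j (m+1) with h | h
      · rw [hs'le i (by omega), hs'le j (by omega)]
        exact hdiff i j hij (by omega)
      · have hj' : j = m + 1 := by omega
        subst hj'
        rw [hs'le i (by omega), hs'top]
        have hle := hsmono i (by omega)
        have : s m + y - s i = (s m - s i) + y := by omega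
        rw [this]
        exact hinv i (by omega) y hyE
    · intro i hi z hz
      obtain ⟨hzE, hzy⟩ := hz
      rcases Nat.lt_or_ge i (m+1) with h | h
      · rw [hs'le i (by omega), hs'top]
        have hle := hsmono i (by omega)
        have e : s m + y - s i + z = (s m - s i) + (y + z) := by omega
        rw [e]
        exact hinv i (by omega) (y + z) hzy
      · have hi' : i = m + 1 := by omega
        subst hi'
        rw [hs'top]
        simpa using hEC hzE

/-- the positive difference set of a positive-density set belongs to every essential idempotent -/
lemma diffset_mem (hq : IsEssentialIdempotent q) {D : Set ℕ} (hD : 0 < upperBanachDensity D) :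
    {n : ℕ | 1 ≤ n ∧ ∃ d ∈ D, d + n ∈ D} ∈ q := by
  by_contra hmem
  have hC : {n : ℕ | 1 ≤ n ∧ ∃ d ∈ D, d + n ∈ D}ᶜ ∈ q := (Ultrafilter.compl_mem_iff_notMem).mpr hmem
  obtain ⟨m, hm1, hpig⟩ := uBD_pigeonDiff hD
  obtain ⟨s, hmono, hdiff⟩ := galvin_chain hq _ hC m
  obtain ⟨i, j, hij, hjm, d, hdD, hdd⟩ := hpig s hmono
  have hn := hdiff i j hij hjm
  exact hn ⟨by have := hmono i j hij hjm; omega, d, hdD, hdd⟩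

end Ultra

section ProdHelpers

variable (w : ℤ → ℂ)

lemma prodIoc_split (m : ℤ) (a b : ℕ) :
    (∏ i ∈ Finset.Ioc m (m + ((a + b : ℕ) : ℤ)), w i) =
      (∏ i ∈ Finset.Ioc m (m + (a:ℤ)), w i) *
        ∏ i ∈ Finset.Ioc (m + (a:ℤ)) ((m + (a:ℤ)) + (b:ℤ)), w i := by
  have hend : (m + ((a+b:ℕ):ℤ)) = (m + (a:ℤ)) + (b:ℤ) := by push_cast; ring
  have hdisj : Disjoint (Finset.Ioc m (m + (a:ℤ)))
      (Finset.Ioc (m + (a:ℤ)) ((m + (a:ℤ)) + (b:ℤ))) := by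
    rw [Finset.disjoint_left]
    intro i hi hi'
    rw [Finset.mem_Ioc] at hi hi'
    omega
  rw [hend, ← Finset.prod_union hdisj, Finset.Ioc_union_Ioc_eq_Ioc (by omega) (by omega)]

lemma prodIoc_succ (m : ℤ) (n : ℕ) :
    (∏ i ∈ Finset.Ioc m (m + ((n:ℤ) + 1)), w i) =
      (∏ i ∈ Finset.Ioc m (m + (n:ℤ)), w i) * w (m + (n:ℤ) + 1) := by
  have h : Finset.Ioc m (m + ((n:ℤ) + 1)) = insert (m + (n:ℤ) + 1) (Finset.Ioc m (m + (n:ℤ))) := by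
    ext i
    simp only [Finset.mem_Ioc, Finset.mem_insert]
    omega
  rw [h, Finset.prod_insert (by simp only [Finset.mem_Ioc]; omega), mul_comm]

end ProdHelpers

section Abstract

variable {X : Type*} [NormedAddCommGroup X] [NormedSpace ℂ X]
variable (B : X →L[ℂ] X) (e : ℤ → X) (w : ℤ → ℂ) (φ : ℤ → X → ℂ)
variable (hφadd : ∀ m x y, φ m (x + y) = φ m x + φ m y)
variable (hφsmul : ∀ m (c : ℂ) x, φ m (c • x) = c * φ m x)
variable (hφe : ∀ m k, φ m (e k) = if k = m then 1 else 0)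
variable (hφnorm : ∀ m x, ‖φ m x‖ ≤ ‖x‖)
variable (hB : ∀ k, B (e k) = w k • e (k - 1))
variable (hdense : ∀ x : X, ∀ ε : ℝ, 0 < ε →
  ∃ (t : Finset ℤ) (c : ℤ → ℂ), ‖x - ∑ k ∈ t, c k • e k‖ ≤ ε)

include hφadd hφsmul in
lemma phi_zero : ∀ m, φ m 0 = 0 := by
  intro m
  have := hφsmul m 0 0
  simpa using this

include hφadd hφsmul in
lemma phi_sub : ∀ m (x y : X), φ m (x - y) = φ m x - φ m y := by
  intro m x y
  have h := hφadd m (x - y) y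
  rw [sub_add_cancel] at h
  rw [eq_sub_iff_add_eq]
  exact h.symm

include hφadd hφsmul in
lemma phi_sum : ∀ m (t : Finset ℤ) (f : ℤ → X), φ m (∑ k ∈ t, f k) = ∑ k ∈ t, φ m (f k) := by
  intro m t f
  classical
  induction t using Finset.cons_induction with
  | empty => simpa using phi_zero _ hφadd hφsmul m
  | cons a t ha ih =>
    rw [Finset.sum_cons, hφadd, ih, Finset.sum_cons]

include hφadd hφsmul hφe hφnorm hB hdense in
lemma shift_coord : ∀ (m : ℤ) (x : X), φ m (B x) = w (m + 1) * φ (m + 1) x := by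
  intro m x
  classical
  -- equality on finite sums of basis vectors
  have hspan : ∀ (t : Finset ℤ) (c : ℤ → ℂ),
      φ m (B (∑ k ∈ t, c k • e k)) = w (m+1) * φ (m+1) (∑ k ∈ t, c k • e k) := by
    intro t c
    have hBs : B (∑ k ∈ t, c k • e k) = ∑ k ∈ t, c k • (w k • e (k - 1)) := by
      rw [map_sum]
      refine Finset.sum_congr rfl fun k _ => ?_
      rw [ContinuousLinearMap.map_smul, hB]
    rw [hBs, phi_sum _ hφadd hφsmul, phi_sum _ hφadd hφsmul]
    have hL : ∑ k ∈ t, φ m (c k • w k • e (k - 1)) = if m + 1 ∈ t then c (m+1) * w (m+1) else 0 := by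
      rw [← Finset.sum_ite_eq' t (m+1) (fun k => c k * w k)]
      refine Finset.sum_congr rfl fun k _ => ?_
      rw [hφsmul, hφsmul, hφe]
      by_cases h : k = m + 1
      · subst h; simp
      · rw [if_neg (by omega), if_neg h]; ring
    have hR : ∑ k ∈ t, φ (m+1) (c k • e k) = if m + 1 ∈ t then c (m+1) else 0 := by
      rw [← Finset.sum_ite_eq' t (m+1) (fun k => c k)]
      refine Finset.sum_congr rfl fun k _ => ?_
      rw [hφsmul, hφe]
      by_cases h : k = m + 1
      · subst h; simp
      · rw [if_neg h, if_neg h]; ring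
    rw [hL, hR]
    by_cases h : m + 1 ∈ t <;> simp [h, mul_comm]
  -- approximation
  have key : ∀ ε : ℝ, 0 < ε →
      ‖φ m (B x) - w (m+1) * φ (m+1) x‖ ≤ (‖B‖ + ‖w (m+1)‖) * ε := by
    intro ε hε
    obtain ⟨t, c, hyc⟩ := hdense x ε hε
    set y := ∑ k ∈ t, c k • e k with hy
    have hident : φ m (B x) - w (m+1) * φ (m+1) x
        = φ m (B x - B y) + w (m+1) * (φ (m+1) y - φ (m+1) x) := by
      rw [phi_sub _ hφadd hφsmul, hspan t c]
      ring
    rw [hident]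
    calc ‖φ m (B x - B y) + w (m+1) * (φ (m+1) y - φ (m+1) x)‖
        ≤ ‖φ m (B x - B y)‖ + ‖w (m+1) * (φ (m+1) y - φ (m+1) x)‖ := norm_add_le _ _
      _ ≤ ‖B‖ * ε + ‖w (m+1)‖ * ε := by
          gcongr
          · calc ‖φ m (B x - B y)‖ ≤ ‖B x - B y‖ := hφnorm _ _
              _ = ‖B (x - y)‖ := by rw [map_sub]
              _ ≤ ‖B‖ * ‖x - y‖ := B.le_opNorm _
              _ ≤ ‖B‖ * ε := by gcongr
          · rw [norm_mul]
            gcongr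
            calc ‖φ (m+1) y - φ (m+1) x‖ = ‖φ (m+1) (y - x)‖ := by
                  rw [phi_sub _ hφadd hφsmul]
              _ ≤ ‖y - x‖ := hφnorm _ _
              _ = ‖x - y‖ := by rw [norm_sub_rev]
              _ ≤ ε := hyc
      _ = (‖B‖ + ‖w (m+1)‖) * ε := by ring
  -- conclude
  by_contra hne
  have hpos : 0 < ‖φ m (B x) - w (m+1) * φ (m+1) x‖ := by
    rw [norm_pos_iff, sub_ne_zero]
    exact hne
  set d := ‖φ m (B x) - w (m+1) * φ (m+1) x‖ with hd
  set C := ‖B‖ + ‖w (m+1)‖ with hC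
  have hCnn : 0 ≤ C := by positivity
  have hkey := key (d / (C + 1)) (by positivity)
  have h2 : C * (d / (C+1)) < d := by
    have h3 : C / (C+1) < 1 := by
      rw [div_lt_one (by positivity)]
      linarith
    calc C * (d / (C+1)) = (C/(C+1)) * d := by ring
      _ < 1 * d := mul_lt_mul_of_pos_right h3 hpos
      _ = d := one_mul d
  linarith [hkey]

include hφadd hφsmul hφe hφnorm hB hdense in
lemma pow_coord : ∀ (n : ℕ) (m : ℤ) (x : X),
    φ m ((B ^ n) x) = (∏ i ∈ Finset.Ioc m (m + (n:ℤ)), w i) * φ (m + (n:ℤ)) x := by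
  intro n
  induction n with
  | zero => intro m x; simp
  | succ n ih =>
    intro m x
    have hps : (B ^ (n+1)) x = (B ^ n) (B x) := by
      rw [pow_succ, ContinuousLinearMap.mul_apply]
    rw [hps, ih, shift_coord B e w φ hφadd hφsmul hφe hφnorm hB hdense]
    push_cast
    rw [prodIoc_succ]
    rw [show m + ((n:ℤ) + 1) = m + (n:ℤ) + 1 from by ring]
    ring

end Abstract

section Main

variable {X : Type*} [NormedAddCommGroup X] [NormedSpace ℂ X]

theorem main_abstract (B : X →L[ℂ] X) (e : ℤ → X) (w : ℤ → ℂ) (φ : ℤ → X → ℂ)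
    (hφadd : ∀ m x y, φ m (x + y) = φ m x + φ m y)
    (hφsmul : ∀ m (c : ℂ) x, φ m (c • x) = c * φ m x)
    (hφe : ∀ m k, φ m (e k) = if k = m then 1 else 0)
    (hφnorm : ∀ m x, ‖φ m x‖ ≤ ‖x‖)
    (hB : ∀ k, B (e k) = w k • e (k - 1))
    (hdense : ∀ x : X, ∀ ε : ℝ, 0 < ε →
      ∃ (t : Finset ℤ) (c : ℤ → ℂ), ‖x - ∑ k ∈ t, c k • e k‖ ≤ ε)
    (hrec : TopDRecurrent B)
    (M : ℝ) (hM : 0 < M) (j : ℤ) (l : ℕ) (hl : 1 ≤ l) :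
    InDstar {k : ℕ | l * k ∈ AMjZ w M j} ∧ InDstar {k : ℕ | l * k ∈ AbarMjZ w M j} := by
  obtain ⟨p, hp, H⟩ := hrec
  set ε : ℝ := 1/(M+2) with hεdef
  have hM2 : (0:ℝ) < M + 2 := by linarith
  have hε0 : 0 < ε := by rw [hεdef]; positivity
  have hε1 : ε < 1 := by rw [hεdef, div_lt_one hM2]; linarith
  have hεM : ε * (M + 2) = 1 := by rw [hεdef]; field_simp
  obtain ⟨x, hx⟩ := H (Metric.ball (e j) ε) Metric.isOpen_ball ⟨e j, Metric.mem_ball_self hε0⟩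
  obtain ⟨k₀, hk₀⟩ := Ultrafilter.nonempty_of_mem (hx l)
  set D : Set ℕ :=
    {a : ℕ | ∀ j' ≤ l, (B ^ (j' * k₀)) ((fun _ : ℕ => (1:ℂ)) a • (B ^ a) x) ∈ Metric.ball (e j) ε}
    with hDdef
  have hD : 0 < upperBanachDensity D := hk₀
  have hmem : ∀ a ∈ D, (B ^ a) x ∈ Metric.ball (e j) ε := by
    intro a ha
    have h0 := ha 0 (Nat.zero_le l)
    simpa using h0
  obtain ⟨c, hcl, hDc⟩ := uBD_pos_residue hl hD
  have hD' : 0 < upperBanachDensity {m : ℕ | c + l * m ∈ {n : ℕ | n ∈ D ∧ n % l = c}} :=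
    uBD_pos_scale hl (fun n hn => hn.2) hDc
  -- coordinate estimate for points of the ball
  have hest : ∀ z ∈ Metric.ball (e j) ε, ∀ m : ℤ, ‖φ m z - (if j = m then 1 else 0)‖ < ε := by
    intro z hz m
    rw [Metric.mem_ball, dist_eq_norm] at hz
    calc ‖φ m z - (if j = m then 1 else 0)‖ = ‖φ m (z - e j)‖ := by
          rw [phi_sub _ hφadd hφsmul, hφe]
      _ ≤ ‖z - e j‖ := hφnorm _ _
      _ < ε := hz
  -- the key estimate for positive differences
  have key : ∀ n : ℕ, 1 ≤ n →
      (∃ d : ℕ, (c + l*d) ∈ D ∧ (c + l*(d+n)) ∈ D) →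
      (l * n ∈ AMjZ w M j ∧ l * n ∈ AbarMjZ w M j) := by
    rintro n hn1 ⟨d, haD, haD'⟩
    set a : ℕ := c + l * d with ha
    set N : ℕ := l * n with hNdef
    have hN1 : 1 ≤ N := by
      have := Nat.mul_le_mul hl hn1
      omega
    have hy : (B ^ a) x ∈ Metric.ball (e j) ε := hmem _ haD
    have hy' : (B ^ (N + a)) x ∈ Metric.ball (e j) ε := by
      have he : c + l*(d+n) = N + a := by rw [hNdef, ha]; ring
      rw [← he]; exact hmem _ haD'
    have hpow := pow_coord B e w φ hφadd hφsmul hφe hφnorm hB hdense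
    -- (1) : 1 - ε < ‖P j a‖ * ‖φ (j+a) x‖
    have h1 : ‖(∏ i ∈ Finset.Ioc j (j + (a:ℤ)), w i) * φ (j + (a:ℤ)) x - 1‖ < ε := by
      have := hest _ hy j
      rw [if_pos rfl, hpow a j x] at this
      exact this
    have h1' : 1 - ε < ‖∏ i ∈ Finset.Ioc j (j + (a:ℤ)), w i‖ * ‖φ (j + (a:ℤ)) x‖ := by
      rw [← norm_mul]
      set u := (∏ i ∈ Finset.Ioc j (j + (a:ℤ)), w i) * φ (j + (a:ℤ)) x
      have habs : ‖(1:ℂ)‖ - ‖u‖ ≤ ‖u - 1‖ := by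
        calc ‖(1:ℂ)‖ - ‖u‖ ≤ ‖(1:ℂ) - u‖ := norm_sub_norm_le 1 u
          _ = ‖u - 1‖ := by rw [norm_sub_rev]
      rw [norm_one] at habs
      linarith
    -- (2) : ‖P (j+N) a‖ * ‖φ ((j+N)+a) x‖ < ε
    have h2 : ‖∏ i ∈ Finset.Ioc (j + (N:ℤ)) ((j + (N:ℤ)) + (a:ℤ)), w i‖ *
        ‖φ ((j + (N:ℤ)) + (a:ℤ)) x‖ < ε := by
      have h := hest _ hy (j + (N:ℤ))
      rw [if_neg (by omega), hpow a (j + (N:ℤ)) x, sub_zero, norm_mul] at h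
      exact h
    -- (3) : 1 - ε < ‖P j N‖ * (‖P (j+N) a‖ * ‖φ ((j+N)+a) x‖)
    have h3 : 1 - ε < ‖∏ i ∈ Finset.Ioc j (j + (N:ℤ)), w i‖ *
        (‖∏ i ∈ Finset.Ioc (j + (N:ℤ)) ((j + (N:ℤ)) + (a:ℤ)), w i‖ *
          ‖φ ((j + (N:ℤ)) + (a:ℤ)) x‖) := by
      have h := hest _ hy' j
      rw [if_pos rfl, hpow (N+a) j x] at h
      rw [prodIoc_split w j N a] at h
      rw [show j + ((N + a : ℕ):ℤ) = (j + (N:ℤ)) + (a:ℤ) from by push_cast; ring] at h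
      have h' : 1 - ε < ‖(∏ i ∈ Finset.Ioc j (j + (N:ℤ)), w i) *
          (∏ i ∈ Finset.Ioc (j + (N:ℤ)) (j + (N:ℤ) + (a:ℤ)), w i) *
          φ (j + (N:ℤ) + (a:ℤ)) x‖ := by
        set u := (∏ i ∈ Finset.Ioc j (j + (N:ℤ)), w i) *
          (∏ i ∈ Finset.Ioc (j + (N:ℤ)) (j + (N:ℤ) + (a:ℤ)), w i) *
          φ (j + (N:ℤ) + (a:ℤ)) x with hu
        have habs : ‖(1:ℂ)‖ - ‖u‖ ≤ ‖u - 1‖ := by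
          calc ‖(1:ℂ)‖ - ‖u‖ ≤ ‖(1:ℂ) - u‖ := norm_sub_norm_le 1 u
            _ = ‖u - 1‖ := by rw [norm_sub_rev]
        rw [norm_one] at habs
        rw [hu] at h ⊢
        linarith
      rw [norm_mul, norm_mul] at h'
      rw [mul_assoc] at h'
      exact h'
    -- conclude the A part : M < ‖P j N‖
    have hPjN : M < ‖∏ i ∈ Finset.Ioc j (j + (N:ℤ)), w i‖ := by
      set P := ‖∏ i ∈ Finset.Ioc j (j + (N:ℤ)), w i‖ with hP
      set t := ‖∏ i ∈ Finset.Ioc (j + (N:ℤ)) ((j + (N:ℤ)) + (a:ℤ)), w i‖ *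
          ‖φ ((j + (N:ℤ)) + (a:ℤ)) x‖ with ht
      have hPnn : 0 ≤ P := norm_nonneg _
      have htnn : 0 ≤ t := by positivity
      have hPε : 1 - ε < P * ε := by
        calc 1 - ε < P * t := h3
          _ ≤ P * ε := mul_le_mul_of_nonneg_left (le_of_lt h2) hPnn
      by_contra hcon
      push_neg at hcon
      have : P * ε ≤ M * ε := mul_le_mul_of_nonneg_right hcon hε0.le
      nlinarith [hεM]
    -- conclude the Abar part : ‖Q‖ < 1/M
    have h4 : ‖∏ i ∈ Finset.Ioc (j - (N:ℤ)) j, w i‖ *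
        (‖∏ i ∈ Finset.Ioc j (j + (a:ℤ)), w i‖ * ‖φ (j + (a:ℤ)) x‖) < ε := by
      have h := hest _ hy' (j - (N:ℤ))
      rw [if_neg (by omega), hpow (N+a) (j - (N:ℤ)) x, sub_zero] at h
      rw [prodIoc_split w (j - (N:ℤ)) N a] at h
      rw [show (j - (N:ℤ)) + (N:ℤ) = j from by ring] at h
      rw [show (j - (N:ℤ)) + ((N + a : ℕ):ℤ) = j + (a:ℤ) from by push_cast; ring] at h
      rw [norm_mul, norm_mul, mul_assoc] at h
      exact h
    have hQ : ‖∏ i ∈ Finset.Ioc (j - (N:ℤ)) j, w i‖ < 1 / M := by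
      set Q := ‖∏ i ∈ Finset.Ioc (j - (N:ℤ)) j, w i‖ with hQd
      set u := ‖∏ i ∈ Finset.Ioc j (j + (a:ℤ)), w i‖ * ‖φ (j + (a:ℤ)) x‖ with hu
      have hQnn : 0 ≤ Q := norm_nonneg _
      have hu1 : 1 - ε < u := h1'
      by_contra hcon
      push_neg at hcon
      have hMinv : M * (1/M) = 1 := by field_simp
      have hMQ : 1 ≤ M * Q := by
        have := mul_le_mul_of_nonneg_left hcon hM.le
        rwa [hMinv] at this
      have hu0 : 0 < u := by linarith
      have e1 : (1-ε) * 1 ≤ u * (M * Q) :=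
        mul_le_mul hu1.le hMQ zero_le_one hu0.le
      have e2 : M * (Q * u) < M * ε := mul_lt_mul_of_pos_left h4 hM
      have hMε : M * ε = 1 - 2*ε := by
        rw [mul_comm]; linarith [hεM]
      have e3 : u * (M * Q) = M * (Q * u) := by ring
      linarith
    constructor
    · show M < ∏ i ∈ Finset.Icc (j + 1) (j + ((l*n : ℕ):ℤ)), ‖w i‖
      have hset : Finset.Icc (j + 1) (j + ((l*n : ℕ):ℤ)) = Finset.Ioc j (j + (N:ℤ)) := by
        rw [hNdef]
        ext i
        simp only [Finset.mem_Icc, Finset.mem_Ioc]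
        omega
      rw [hset, ← norm_prod]
      exact hPjN
    · show ∏ i ∈ Finset.Icc (j - ((l*n : ℕ):ℤ) + 1) j, ‖w i‖ < 1 / M
      have hset : Finset.Icc (j - ((l*n : ℕ):ℤ) + 1) j = Finset.Ioc (j - (N:ℤ)) j := by
        rw [hNdef]
        ext i
        simp only [Finset.mem_Icc, Finset.mem_Ioc]
        omega
      rw [hset, ← norm_prod]
      exact hQ
  constructor
  · intro q hq
    apply Filter.mem_of_superset (diffset_mem hq hD')
    rintro n ⟨hn1, d, hd, hdn⟩
    exact (key n hn1 ⟨d, hd.1, hdn.1⟩).1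
  · intro q hq
    apply Filter.mem_of_superset (diffset_mem hq hD')
    rintro n ⟨hn1, d, hd, hdn⟩
    exact (key n hn1 ⟨d, hd.1, hdn.1⟩).2

end Main

section C0inst

lemma c0_coe_sum (t : Finset ℤ) (f : ℤ → ZeroAtInftyContinuousMap ℤ ℂ) (m : ℤ) :
    (∑ k ∈ t, f k) m = ∑ k ∈ t, f k m := by
  classical
  induction t using Finset.cons_induction with
  | empty => simp
  | cons a t ha ih => rw [Finset.sum_cons, Finset.sum_cons, ZeroAtInftyContinuousMap.coe_add,
      Pi.add_apply, ih]

lemma c0_norm_apply_le (f : ZeroAtInftyContinuousMap ℤ ℂ) (m : ℤ) : ‖f m‖ ≤ ‖f‖ := by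
  rw [← ZeroAtInftyContinuousMap.norm_toBCF_eq_norm]
  exact BoundedContinuousFunction.norm_coe_le_norm f.toBCF m

lemma c0_norm_le {f : ZeroAtInftyContinuousMap ℤ ℂ} {C : ℝ} (hC : 0 ≤ C)
    (h : ∀ m, ‖f m‖ ≤ C) : ‖f‖ ≤ C := by
  rw [← ZeroAtInftyContinuousMap.norm_toBCF_eq_norm]
  exact (BoundedContinuousFunction.norm_le hC).mpr h

lemma c0_dense_s12 (x : ZeroAtInftyContinuousMap ℤ ℂ) (ε : ℝ) (hε : 0 < ε) :
    ∃ (t : Finset ℤ) (c : ℤ → ℂ), ‖x - ∑ k ∈ t, c k • c0Single k‖ ≤ ε := by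
  classical
  have h0 := x.zero_at_infty'
  rw [Filter.cocompact_eq_cofinite] at h0
  have hev : ∀ᶠ m in Filter.cofinite, dist (x m) 0 < ε := Metric.tendsto_nhds.mp h0 ε hε
  have hfin : {m : ℤ | ¬ dist (x m) 0 < ε}.Finite := Filter.eventually_cofinite.mp hev
  refine ⟨hfin.toFinset, fun k => x k, ?_⟩
  apply c0_norm_le hε.le
  intro m
  rw [ZeroAtInftyContinuousMap.coe_sub, Pi.sub_apply, c0_coe_sum]
  have hsum : ∑ k ∈ hfin.toFinset, (x k • c0Single k) m
      = if m ∈ hfin.toFinset then x m else 0 := by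
    rw [← Finset.sum_ite_eq hfin.toFinset m (fun k => x k)]
    refine Finset.sum_congr rfl fun k _ => ?_
    rw [ZeroAtInftyContinuousMap.coe_smul]
    simp only [Pi.smul_apply, smul_eq_mul]
    have : (c0Single k : ℤ → ℂ) m = if m = k then 1 else 0 := rfl
    rw [this]
    by_cases h : m = k
    · subst h; simp
    · rw [if_neg h, if_neg (by omega), mul_zero]
  rw [hsum]
  by_cases h : m ∈ hfin.toFinset
  · rw [if_pos h]; simpa using hε.le
  · rw [if_neg h, sub_zero]
    rw [Set.Finite.mem_toFinset, Set.mem_setOf_eq, not_not] at h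
    rw [dist_zero_right] at h
    exact h.le

end C0inst

section lpinst

variable (p : ENNReal) [Fact (1 ≤ p)]

lemma lp_p_ne_zero : p ≠ 0 := (zero_lt_one.trans_le Fact.out).ne'

lemma lp_single_coord (k m : ℤ) :
    (lp.single p k (1:ℂ) : lp (fun _ : ℤ => ℂ) p) m = if k = m then 1 else 0 := by
  by_cases h : m = k
  · subst h
    rw [lp.single_apply_self, if_pos rfl]
  · rw [lp.single_apply_ne p k _ h, if_neg (by omega)]

lemma lp_single_smul' (k : ℤ) (c : ℂ) :
    lp.single p k c = c • (lp.single p k (1:ℂ) : lp (fun _ : ℤ => ℂ) p) := by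
  apply lp.ext
  funext m
  rw [lp.coeFn_smul, Pi.smul_apply, smul_eq_mul]
  by_cases h : m = k
  · subst h
    rw [lp.single_apply_self, lp.single_apply_self, mul_one]
  · rw [lp.single_apply_ne p k _ h, lp.single_apply_ne p k _ h, mul_zero]

lemma lp_dense_s12 (hp : p ≠ ⊤) (x : lp (fun _ : ℤ => ℂ) p) (ε : ℝ) (hε : 0 < ε) :
    ∃ (t : Finset ℤ) (c : ℤ → ℂ),
      ‖x - ∑ k ∈ t, c k • (lp.single p k (1:ℂ) : lp (fun _ : ℤ => ℂ) p)‖ ≤ ε := by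
  have hs := lp.hasSum_single hp x
  rw [HasSum, Metric.tendsto_nhds] at hs
  obtain ⟨t, ht⟩ := (hs ε hε).exists
  refine ⟨t, fun k => x k, ?_⟩
  have : ∑ k ∈ t, (x k) • (lp.single p k (1:ℂ) : lp (fun _ : ℤ => ℂ) p)
      = ∑ k ∈ t, lp.single p k (x k) := by
    refine Finset.sum_congr rfl fun k _ => (lp_single_smul' p k (x k)).symm
  rw [this, norm_sub_rev, ← dist_eq_norm]
  exact ht.le

end lpinst

theorem stmt12 :
    (∀ w : ℤ → ℂ, (∀ k, w k ≠ 0) → BddWeight w →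
      ∀ B : ZeroAtInftyContinuousMap ℤ ℂ →L[ℂ] ZeroAtInftyContinuousMap ℤ ℂ,
        IsBilateralWeightedShift c0Single w B →
        TopDRecurrent B →
        ∀ r : ℕ, ∀ M > (0 : ℝ), ∀ j : ℤ, ∀ l : ℕ, 1 ≤ l → l ≤ r →
          InDstar {k : ℕ | l * k ∈ AMjZ w M j} ∧
          InDstar {k : ℕ | l * k ∈ AbarMjZ w M j}) ∧
    ∀ (p : ℝ≥0∞) [Fact (1 ≤ p)], p ≠ ∞ →
      ∀ w : ℤ → ℂ, (∀ k, w k ≠ 0) → BddWeight w →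
      ∀ B : lp (fun _ : ℤ => ℂ) p →L[ℂ] lp (fun _ : ℤ => ℂ) p,
        IsBilateralWeightedShift (fun k => lp.single p k 1) w B →
        TopDRecurrent B →
        ∀ r : ℕ, ∀ M > (0 : ℝ), ∀ j : ℤ, ∀ l : ℕ, 1 ≤ l → l ≤ r →
          InDstar {k : ℕ | l * k ∈ AMjZ w M j} ∧
          InDstar {k : ℕ | l * k ∈ AbarMjZ w M j} := by
  constructor
  · intro w hw0 hbdd B hshift hrec r M hM j l hl1 hlr
    exact main_abstract B c0Single w (fun m f => f m)
      (fun m x y => by simp)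
      (fun m c x => by simp)
      (fun m k => by
        show (c0Single k : ℤ → ℂ) m = _
        show (if m = k then (1:ℂ) else 0) = if k = m then 1 else 0
        by_cases h : m = k
        · subst h; simp
        · rw [if_neg h, if_neg (by omega)])
      (fun m x => c0_norm_apply_le x m)
      hshift
      (fun x ε hε => c0_dense_s12 x ε hε)
      hrec M hM j l hl1
  · intro p _inst hp w hw0 hbdd B hshift hrec r M hM j l hl1 hlr
    exact main_abstract B (fun k => lp.single p k 1) w (fun m f => f m)
      (fun m x y => by simp [lp.coeFn_add])
      (fun m c x => by simp [lp.coeFn_smul])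
      (fun m k => lp_single_coord p k m)
      (fun m x => lp.norm_apply_le_norm (lp_p_ne_zero p) x m)
      hshift
      (fun x ε hε => lp_dense_s12 p hp x ε hε)
      hrec M hM j l hl1
end
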